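/- arXiv:math/9707208 — 8 statements merged into one kernel-verified Lean document; each statement's English description precedes it below -/
import Mathlib

section
/- Let X be a compact Hausdorff topological space, let τ ∈ ℂ with |τ| = 1, let ψ : X → X be a homeomorphism, and let t : C(X,ℂ) → ℂ be a linear functional with t(1) ≠ −τ. Then the map φ : C(X,ℂ) → C(X,ℂ) defined by φ(f) = τ·(f ∘ ψ) + t(f)·1 is a bijective linear map satisfying diam(φ(f)(X)) = diam(f(X)) for every f ∈ C(X,ℂ). -/
/-- On a compact Hausdorff space `X`, every linear map of the form
`φ(f) = τ · (f ∘ ψ) + t(f) · 1` with `|τ| = 1`, `ψ` a homeomorphism and `t` a linear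
functional with `t(1) ≠ -τ`, is a diameter preserving linear bijection of `C(X,ℂ)`. -/
theorem form_implies_diameter_preserving_bijection
    {X : Type*} [TopologicalSpace X] [CompactSpace X] [T2Space X]
    (τ : ℂ) (hτ : ‖τ‖ = 1) (ψ : X ≃ₜ X)
    (t : C(X, ℂ) →ₗ[ℂ] ℂ) (ht : t 1 ≠ -τ)
    (φ : C(X, ℂ) →ₗ[ℂ] C(X, ℂ))
    (hφ : ∀ f : C(X, ℂ), φ f = τ • f.comp (ψ : C(X, X)) + t f • (1 : C(X, ℂ))) :
    Function.Bijective φ ∧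
      ∀ f : C(X, ℂ), Metric.diam (Set.range ⇑(φ f)) = Metric.diam (Set.range ⇑f) := by
  have hτ0 : τ ≠ 0 := by
    intro h; rw [h] at hτ; simp at hτ
  have hden : τ + t 1 ≠ 0 := by
    intro h
    exact ht (by linear_combination h)
  constructor
  · constructor
    · rw [injective_iff_map_eq_zero]
      intro f hf
      rw [hφ f] at hf
      -- f is constant with value c := -(t f)/τ
      set c : ℂ := -(t f) / τ with hc
      have hconst : ∀ x, f x = c := by
        intro x
        have hx := ContinuousMap.congr_fun hf (ψ.symm x)
        simp only [ContinuousMap.add_apply, ContinuousMap.smul_apply,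
          ContinuousMap.comp_apply, ContinuousMap.coe_coe, Homeomorph.apply_symm_apply,
          ContinuousMap.one_apply, ContinuousMap.zero_apply, smul_eq_mul, mul_one] at hx
        rw [hc, eq_div_iff hτ0]
        linear_combination hx
      have hfc : f = c • (1 : C(X, ℂ)) := by
        ext x; simp [hconst x]
      have htf : t f = c * t 1 := by
        rw [hfc]; simp [smul_eq_mul]
      have hc0 : c = 0 := by
        have : c * τ = -(t f) := by
          rw [hc, div_mul_cancel₀ _ hτ0]
        rw [htf] at this
        have h2 : c * (τ + t 1) = 0 := by ring_nf; linear_combination this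
        rcases mul_eq_zero.mp h2 with h | h
        · exact h
        · exact absurd h hden
      rw [hfc, hc0, zero_smul]
    · intro g
      set f₀ : C(X, ℂ) := τ⁻¹ • g.comp (ψ.symm : C(X, X)) with hf0
      set s : ℂ := -(t f₀) / (τ + t 1) with hs
      refine ⟨f₀ + s • (1 : C(X, ℂ)), ?_⟩
      rw [hφ]
      ext x
      simp only [ContinuousMap.add_apply, ContinuousMap.smul_apply,
        ContinuousMap.comp_apply, ContinuousMap.coe_coe, ContinuousMap.one_apply,
        smul_eq_mul, mul_one, hf0, map_add, map_smul]
      have ht0 : t f₀ = τ⁻¹ * t (g.comp (ψ.symm : C(X, X))) := by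
        rw [hf0]; simp [smul_eq_mul]
      have key : τ * s + (τ⁻¹ * t (g.comp (ψ.symm : C(X, X))) + s * t 1) = 0 := by
        rw [hs, ht0]
        field_simp
        ring
      simp only [Homeomorph.symm_apply_apply]
      linear_combination key + g x * mul_inv_cancel₀ hτ0
  · intro f
    set c : ℂ := t f with hc
    have hiso : Isometry (fun z : ℂ => τ * z + c) := by
      intro a b
      simp only [edist_eq_enorm_sub, enorm_eq_nnnorm]
      congr 1
      have : τ * a + c - (τ * b + c) = τ * (a - b) := by ring
      rw [this]
      simp [nnnorm_mul, ← NNReal.coe_inj, hτ]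
    have hrange : Set.range ⇑(φ f) = (fun z : ℂ => τ * z + c) '' Set.range ⇑f := by
      rw [hφ f]
      ext z
      constructor
      · rintro ⟨x, rfl⟩
        exact ⟨f (ψ x), ⟨ψ x, rfl⟩, by simp [smul_eq_mul, hc]⟩
      · rintro ⟨w, ⟨x, rfl⟩, rfl⟩
        exact ⟨ψ.symm x, by simp [smul_eq_mul, hc]⟩
    rw [hrange, hiso.diam_image]
end

section
/- Let n ≥ 1 be a natural number. A linear bijection T : ℝⁿ → ℝⁿ satisfies max_{i,j} |(Tx)_i − (Tx)_j| = max_{i,j} |x_i − x_j| for every x ∈ ℝⁿ if and only if there exist τ ∈ {1, −1}, a permutation σ of {1,…,n}, and a linear functional t : ℝⁿ → ℝ with t(𝟙) ≠ −τ (where 𝟙 = (1,…,1)) such that (Tx)_i = τ·x_{σ(i)} + t(x) for every x ∈ ℝⁿ and every index i. -/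
open Finset

namespace CDP

variable {n : ℕ}

/-- diameter of coordinates -/
noncomputable def pd (x : Fin n → ℝ) : ℝ := ⨆ i, ⨆ j, |x i - x j|

/-- basis vector -/
def eb (m : Fin n) : Fin n → ℝ := fun j => if m = j then 1 else 0

lemma le_pd [NeZero n] (x : Fin n → ℝ) (i j : Fin n) : |x i - x j| ≤ pd x := by
  have h1 : |x i - x j| ≤ ⨆ j, |x i - x j| :=
    le_ciSup (f := fun j => |x i - x j|) (Set.Finite.bddAbove (Set.finite_range _)) j
  exact h1.trans (le_ciSup (f := fun i => ⨆ j, |x i - x j|)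
    (Set.Finite.bddAbove (Set.finite_range _)) i)

lemma pd_le [NeZero n] {x : Fin n → ℝ} {c : ℝ} (h : ∀ i j, |x i - x j| ≤ c) : pd x ≤ c :=
  ciSup_le fun i => ciSup_le fun j => h i j

lemma pd_nonneg [NeZero n] (x : Fin n → ℝ) : 0 ≤ pd x := by
  have := le_pd x (Classical.arbitrary _) (Classical.arbitrary _)
  simpa using this

/-- membership in the dual ball -/
def memB (f : Fin n → ℝ) : Prop := (∑ m, f m = 0) ∧ (∑ m, |f m|) ≤ 2

lemma lemA [NeZero n] {f : Fin n → ℝ}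
    (h : ∀ x : Fin n → ℝ, |∑ m, f m * x m| ≤ pd x) : memB f := by
  have hsum : ∑ m, f m = 0 := by
    have h1 := h (fun _ => 1)
    have h2 : pd (n := n) (fun _ => (1:ℝ)) = 0 := by
      apply le_antisymm (pd_le fun i j => by simp) (pd_nonneg _)
    rw [h2] at h1
    simpa using abs_nonpos_iff.mp (by simpa using h1)
  have hpos : ∑ m, max (f m) 0 ≤ 1 := by
    have h1 := h (fun m => if 0 < f m then 1 else 0)
    have h2 : pd (n := n) (fun m => if 0 < f m then (1:ℝ) else 0) ≤ 1 :=
      pd_le fun i j => by split_ifs <;> norm_num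
    have h3 : ∑ m, f m * (if 0 < f m then (1:ℝ) else 0) = ∑ m, max (f m) 0 := by
      refine Finset.sum_congr rfl fun m _ => ?_
      split_ifs with hm
      · simp [max_eq_left hm.le]
      · push_neg at hm; simp [max_eq_right hm]
    rw [h3] at h1
    exact (le_abs_self _).trans (h1.trans h2)
  constructor
  · exact hsum
  · have h4 : ∑ m, |f m| = 2 * (∑ m, max (f m) 0) - ∑ m, f m := by
      rw [Finset.mul_sum, ← Finset.sum_sub_distrib]
      refine Finset.sum_congr rfl fun m _ => ?_
      rcases le_total (f m) 0 with hm | hm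
      · simp [abs_of_nonpos hm, max_eq_right hm]
      · simp [abs_of_nonneg hm, max_eq_left hm]; ring
    rw [h4, hsum]; linarith

lemma lemB [NeZero n] {f : Fin n → ℝ} (hf : memB f) (x : Fin n → ℝ) :
    |∑ m, f m * x m| ≤ pd x := by
  obtain ⟨imax, hmax⟩ := Finite.exists_max x
  obtain ⟨imin, hmin⟩ := Finite.exists_min x
  set c : ℝ := (x imax + x imin) / 2 with hc
  have hrange : x imax - x imin ≤ pd x := (le_abs_self _).trans (le_pd x imax imin)
  have hd : ∀ m, |x m - c| ≤ pd x / 2 := by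
    intro m
    rw [abs_le]
    constructor <;> [skip; skip] <;> (rw [hc]; have h1 := hmax m; have h2 := hmin m; linarith)
  have hsum : ∑ m, f m * x m = ∑ m, f m * (x m - c) := by
    have : ∑ m, f m * (x m - c) = ∑ m, f m * x m - (∑ m, f m) * c := by
      rw [Finset.sum_mul, ← Finset.sum_sub_distrib]
      exact Finset.sum_congr rfl fun m _ => by ring
    rw [this, hf.1]; ring
  rw [hsum]
  calc |∑ m, f m * (x m - c)| ≤ ∑ m, |f m * (x m - c)| := Finset.abs_sum_le_sum_abs _ _
    _ = ∑ m, |f m| * |x m - c| := by simp [abs_mul]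
    _ ≤ ∑ m, |f m| * (pd x / 2) :=
        Finset.sum_le_sum fun m _ => mul_le_mul_of_nonneg_left (hd m) (abs_nonneg _)
    _ = (∑ m, |f m|) * (pd x / 2) := by rw [Finset.sum_mul]
    _ ≤ 2 * (pd x / 2) := by
        have := pd_nonneg x
        exact mul_le_mul_of_nonneg_right hf.2 (by linarith)
    _ = pd x := by ring

lemma eb_self (m : Fin n) : eb m m = 1 := by simp [eb]

lemma eb_ne {a m : Fin n} (h : a ≠ m) : eb a m = 0 := by simp [eb, h]

lemma sum_eb (a : Fin n) : ∑ m, eb a m = 1 := by simp [eb]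

lemma ebd_eq_one {a b m : Fin n} (h : eb a m - eb b m = (1:ℝ)) : a = m := by
  unfold eb at h; split_ifs at h <;> first | assumption | linarith

lemma ebd_eq_negone {a b m : Fin n} (h : eb a m - eb b m = (-1:ℝ)) : b = m := by
  unfold eb at h; split_ifs at h <;> first | assumption | linarith

lemma ebd_ne_two {a b m : Fin n} (h : eb a m - eb b m = (2:ℝ)) : False := by
  unfold eb at h; split_ifs at h <;> linarith

/-- sharpness: an element of the dual ball with `f i - f j = 2` equals `eb i - eb j`. -/
lemma lemSharp {f : Fin n → ℝ} (hf : memB f) {i j : Fin n} (hij : i ≠ j)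
    (h2 : f i - f j = 2) : ∀ m, f m = eb i m - eb j m := by
  have hpair : |f i| + |f j| ≤ ∑ m, |f m| := by
    have hsub := Finset.sum_le_sum_of_subset_of_nonneg
      (Finset.subset_univ ({i, j} : Finset (Fin n))) (fun m _ _ => abs_nonneg (f m))
    rwa [Finset.sum_pair hij] at hsub
  have hai : f i ≤ |f i| := le_abs_self _
  have haj : -f j ≤ |f j| := neg_le_abs _
  have e1 : |f i| + |f j| = 2 := le_antisymm (hpair.trans hf.2) (by linarith)
  have e2 : ∑ m, |f m| = 2 := le_antisymm hf.2 (by linarith)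
  have hfi : f i = |f i| := by linarith
  have hfj : -f j = |f j| := by linarith
  have hzero : ∀ m, m ≠ i → m ≠ j → f m = 0 := by
    have hsd : ∑ m ∈ Finset.univ \ ({i, j} : Finset (Fin n)), |f m| = 0 := by
      have := Finset.sum_sdiff (f := fun m => |f m|)
        (Finset.subset_univ ({i, j} : Finset (Fin n)))
      rw [Finset.sum_pair hij] at this
      linarith
    intro m hmi hmj
    have hm : m ∈ Finset.univ \ ({i, j} : Finset (Fin n)) := by
      simp [hmi, hmj]
    have := (Finset.sum_eq_zero_iff_of_nonneg (fun m _ => abs_nonneg (f m))).mp hsd m hm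
    exact abs_eq_zero.mp this
  have hsum2 : f i + f j = 0 := by
    have := hf.1
    have hs : ∑ m, f m = f i + f j := by
      rw [← Finset.sum_subset (Finset.subset_univ ({i, j} : Finset (Fin n)))
        (fun m _ hm => by
          simp only [Finset.mem_insert, Finset.mem_singleton] at hm
          push_neg at hm
          exact hzero m hm.1 hm.2)]
      exact Finset.sum_pair hij
    linarith
  have hfi1 : f i = 1 := by linarith
  have hfj1 : f j = -1 := by linarith
  intro m
  rcases eq_or_ne i m with rfl | hi
  · rw [eb_self, eb_ne (Ne.symm hij)]; linarith
  · rcases eq_or_ne j m with rfl | hj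
    · rw [eb_self, eb_ne hi]; linarith
    · rw [eb_ne hi, eb_ne hj]
      simpa using hzero m (fun h => hi h.symm) (fun h => hj h.symm)

/-- combinatorial lemma on differences of "edge vectors" -/
lemma esub_sub {a₁ b₁ a₂ b₂ a₃ b₃ : Fin n} (h1 : a₁ ≠ b₁) (h2 : a₂ ≠ b₂) (h3 : a₃ ≠ b₃)
    (h : ∀ m, (eb a₁ m - eb b₁ m) - (eb a₂ m - eb b₂ m) = eb a₃ m - eb b₃ m) :
    a₁ = a₂ ∨ b₁ = b₂ := by
  by_contra hcon
  push_neg at hcon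
  obtain ⟨ha, hb⟩ := hcon
  -- b₂ ≠ a₁
  have hb2a1 : b₂ ≠ a₁ := by
    intro he
    apply ebd_ne_two (a := a₃) (b := b₃) (m := a₁)
    rw [← h a₁, eb_self, eb_ne (Ne.symm h1), eb_ne (Ne.symm ha), he, eb_self]; ring
  -- a₂ ≠ b₁
  have ha2b1 : a₂ ≠ b₁ := by
    intro he
    apply ebd_ne_two (a := b₃) (b := a₃) (m := b₁)
    have := h b₁
    rw [eb_ne h1, eb_self, he, eb_self, eb_ne (Ne.symm hb)] at this
    unfold eb at this ⊢
    split_ifs at this ⊢ <;> linarith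
  -- a₃ = a₁
  have e1 : a₃ = a₁ := by
    apply ebd_eq_one
    rw [← h a₁, eb_self, eb_ne (Ne.symm h1), eb_ne (Ne.symm ha), eb_ne hb2a1]; ring
  -- b₃ = b₁
  have e2 : b₃ = b₁ := by
    apply ebd_eq_negone
    rw [← h b₁, eb_ne h1, eb_self, eb_ne ha2b1, eb_ne (Ne.symm hb)]; ring
  -- at a₂ : value -1, so b₃ = a₂, contradiction with b₃ = b₁ and a₂ ≠ b₁
  have e3 : b₃ = a₂ := by
    apply ebd_eq_negone
    rw [← h a₂, eb_ne (fun hh : a₁ = a₂ => ha hh), eb_ne (fun hh : b₁ = a₂ => ha2b1 hh.symm),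
      eb_self, eb_ne (Ne.symm h2)]; ring
  exact ha2b1 (e3.symm.trans e2)







variable {n : ℕ}

lemma apply_eq_sum (L : (Fin n → ℝ) →ₗ[ℝ] (Fin n → ℝ)) (x : Fin n → ℝ) (k : Fin n) :
    L x k = ∑ m, x m * L (eb m) k := by
  conv_lhs => rw [LinearMap.pi_apply_eq_sum_univ L x]
  rw [Finset.sum_apply]
  rfl

/-- Main pair lemma: each row difference is an edge vector. -/
lemma key_pair [NeZero n] (T : (Fin n → ℝ) →ₗ[ℝ] (Fin n → ℝ)) (hbij : Function.Bijective T)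
    (hp : ∀ x, pd (T x) = pd x) {i j : Fin n} (hij : i ≠ j) :
    ∃ a b : Fin n, a ≠ b ∧ ∀ m, T (eb m) i - T (eb m) j = eb a m - eb b m := by
  set E := LinearEquiv.ofBijective T hbij with hE
  set S : (Fin n → ℝ) →ₗ[ℝ] (Fin n → ℝ) := (E.symm : (Fin n → ℝ) →ₗ[ℝ] (Fin n → ℝ)) with hSdef
  have hTS : ∀ y, T (S y) = y := fun y => E.apply_symm_apply y
  have hST : ∀ y, S (T y) = y := fun y => E.symm_apply_apply y
  set d : Fin n → ℝ := fun m => T (eb m) i - T (eb m) j with hd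
  have hdx : ∀ x, ∑ m, d m * x m = T x i - T x j := by
    intro x
    rw [apply_eq_sum T x i, apply_eq_sum T x j, ← Finset.sum_sub_distrib]
    exact Finset.sum_congr rfl fun m _ => by simp [hd]; ring
  set Amap : (Fin n → ℝ) → (Fin n → ℝ) := fun b m => ∑ k, b k * S (eb m) k with hAm
  have hAx : ∀ b x, ∑ m, Amap b m * x m = ∑ k, b k * S x k := by
    intro b x
    calc ∑ m, (∑ k, b k * S (eb m) k) * x m
        = ∑ m, ∑ k, b k * S (eb m) k * x m := by
          exact Finset.sum_congr rfl fun m _ => Finset.sum_mul ..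
      _ = ∑ k, ∑ m, b k * S (eb m) k * x m := Finset.sum_comm
      _ = ∑ k, b k * S x k := by
          refine Finset.sum_congr rfl fun k _ => ?_
          rw [apply_eq_sum S x k, Finset.mul_sum]
          exact Finset.sum_congr rfl fun m _ => by ring
  have hmemd : memB d := by
    apply lemA
    intro x
    rw [hdx, ← hp x]
    exact le_pd _ i j
  have hAmem : ∀ b, memB b → memB (Amap b) := by
    intro b hb
    apply lemA
    intro x
    rw [hAx]
    calc |∑ k, b k * S x k| ≤ pd (S x) := lemB hb (S x)
      _ = pd (T (S x)) := (hp _).symm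
      _ = pd x := by rw [hTS]
  have hAd : ∀ m, Amap d m = eb i m - eb j m := by
    intro m
    show ∑ k, d k * S (eb m) k = _
    rw [hdx (S (eb m)), hTS]
    simp [eb, eq_comm]
  have hArec : ∀ b k, b k = ∑ m, Amap b m * T (eb k) m := by
    intro b k
    rw [hAx b (T (eb k)), hST]
    simp [eb, mul_ite]
  -- extremality
  have hext : ∀ b₁ b₂, memB b₁ → memB b₂ → (∀ m, b₁ m + b₂ m = 2 * d m) → b₁ = b₂ := by
    intro b₁ b₂ hb₁ hb₂ hmid
    have hg12 : ∀ m, Amap b₁ m + Amap b₂ m = 2 * (eb i m - eb j m) := by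
      intro m
      have h1 : Amap b₁ m + Amap b₂ m = ∑ k, (b₁ k + b₂ k) * S (eb m) k := by
        rw [← Finset.sum_add_distrib]
        exact Finset.sum_congr rfl fun k _ => by ring
      rw [h1]
      have h2 : ∑ k, (b₁ k + b₂ k) * S (eb m) k = 2 * Amap d m := by
        rw [Finset.mul_sum]
        exact Finset.sum_congr rfl fun k _ => by rw [hmid k]; ring
      rw [h2, hAd]
    have hbound : ∀ g : Fin n → ℝ, memB g → g i - g j ≤ 2 := by
      intro g hg
      have hsub := Finset.sum_le_sum_of_subset_of_nonneg
        (Finset.subset_univ ({i, j} : Finset (Fin n))) (fun m _ _ => abs_nonneg (g m))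
      rw [Finset.sum_pair hij] at hsub
      have := le_abs_self (g i)
      have := neg_le_abs (g j)
      have := hg.2
      linarith
    have hgi : Amap b₁ i + Amap b₂ i = 2 := by rw [hg12 i, eb_self, eb_ne (Ne.symm hij)]; ring
    have hgj : Amap b₁ j + Amap b₂ j = -2 := by rw [hg12 j, eb_self, eb_ne hij]; ring
    have h1 : Amap b₁ i - Amap b₁ j = 2 := by
      have := hbound _ (hAmem b₁ hb₁); have := hbound _ (hAmem b₂ hb₂); linarith
    have h2 : Amap b₂ i - Amap b₂ j = 2 := by
      have := hbound _ (hAmem b₁ hb₁); have := hbound _ (hAmem b₂ hb₂); linarith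
    have hs1 := lemSharp (hAmem b₁ hb₁) hij h1
    have hs2 := lemSharp (hAmem b₂ hb₂) hij h2
    funext k
    rw [hArec b₁ k, hArec b₂ k]
    exact Finset.sum_congr rfl fun m _ => by rw [hs1 m, hs2 m]
  -- d is not zero
  have hdne : ∃ m, d m ≠ 0 := by
    by_contra hc
    push_neg at hc
    have := hAd i
    rw [eb_self, eb_ne (Ne.symm hij)] at this
    have h0 : Amap d i = 0 := Finset.sum_eq_zero fun k _ => by rw [hc k]; ring
    rw [h0] at this; norm_num at this
  -- total variation is exactly 2
  have ht2 : ∑ m, |d m| = 2 := by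
    by_contra hne
    set t := ∑ m, |d m| with htdef
    have htle : t ≤ 2 := hmemd.2
    have htlt : t < 2 := lt_of_le_of_ne htle hne
    have htpos : 0 < t := by
      obtain ⟨m, hm⟩ := hdne
      exact Finset.sum_pos' (fun k _ => abs_nonneg _) ⟨m, Finset.mem_univ m, abs_pos.mpr hm⟩
    have habs : ∀ c : ℝ, ∑ m, |c * d m| = |c| * t := by
      intro c
      rw [htdef, Finset.mul_sum]
      exact Finset.sum_congr rfl fun m _ => abs_mul c (d m)
    have hsum : ∀ c : ℝ, ∑ m, c * d m = 0 := by
      intro c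
      rw [← Finset.mul_sum, hmemd.1, mul_zero]
    have hb₁ : memB (fun m => (2/t) * d m) := by
      constructor
      · exact hsum _
      · rw [habs]
        rw [abs_of_pos (by positivity)]
        rw [div_mul_cancel₀ _ (ne_of_gt htpos)]
    have hb₂ : memB (fun m => (2 - 2/t) * d m) := by
      constructor
      · exact hsum _
      · rw [habs]
        have : |2 - 2/t| * t = |(2 - 2/t) * t| := by rw [abs_mul, abs_of_pos htpos]
        rw [this, sub_mul, div_mul_cancel₀ _ (ne_of_gt htpos)]
        rw [abs_le]; constructor <;> nlinarith
    have heq := hext _ _ hb₁ hb₂ (fun m => by ring)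
    obtain ⟨m, hm⟩ := hdne
    have := congrFun heq m
    have h4 : (2/t - (2 - 2/t)) * d m = 0 := by linarith [this]
    have h5 : 2/t - (2 - 2/t) > 0 := by
      have : 2/t > 1 := (one_lt_div htpos).mpr htlt
      linarith
    exact hm (by
      rcases mul_eq_zero.mp h4 with h | h
      · linarith
      · exact h)
  -- at most one positive / one negative coordinate
  have hsumb : ∀ (c : ℝ) (a a' : Fin n), ∑ m, (d m + c * (eb a m - eb a' m)) = 0 := by
    intro c a a'
    rw [Finset.sum_add_distrib, hmemd.1, ← Finset.mul_sum, Finset.sum_sub_distrib,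
      sum_eb, sum_eb]
    ring
  have hpat : ∀ (g : Fin n → ℝ) (a a' : Fin n) (ε : ℝ),
      (∀ m, |g m| = |d m| + (if a = m then ε else 0) - (if a' = m then ε else 0)) →
      ∑ m, |g m| ≤ 2 := by
    intro g a a' ε hptw
    calc ∑ m, |g m|
        = ∑ m, (|d m| + (if a = m then ε else 0) - (if a' = m then ε else 0)) :=
          Finset.sum_congr rfl fun m _ => hptw m
      _ = (∑ m, (|d m| + (if a = m then ε else 0))) - (∑ m, (if a' = m then ε else 0)) :=
          Finset.sum_sub_distrib _ _
      _ = (∑ m, |d m|) + (∑ m, (if a = m then ε else 0)) - (∑ m, (if a' = m then ε else 0)) := by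
          rw [Finset.sum_add_distrib]
      _ ≤ 2 := by
          rw [ht2, Finset.sum_ite_eq, Finset.sum_ite_eq]
          simp
  have hgen : ∀ a a' : Fin n, a ≠ a' → ∀ ε : ℝ, 0 < ε →
      (∑ m, |d m + ε * (eb a m - eb a' m)| ≤ 2) →
      (∑ m, |d m - ε * (eb a m - eb a' m)| ≤ 2) →
      False := by
    intro a a' haa' ε hεpos hs₁ hs₂
    have hb₁ : memB (fun m => d m + ε * (eb a m - eb a' m)) := ⟨hsumb ε a a', hs₁⟩
    have hb₂ : memB (fun m => d m - ε * (eb a m - eb a' m)) := by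
      refine ⟨?_, hs₂⟩
      have := hsumb (-ε) a a'
      rw [← this]
      exact Finset.sum_congr rfl fun m _ => by ring
    have heq := hext _ _ hb₁ hb₂ (fun m => by ring)
    have h1 := congrFun heq a
    simp only [eb_self, eb_ne (Ne.symm haa')] at h1
    nlinarith [h1]
  have honepos : ∀ a a' : Fin n, a ≠ a' → 0 < d a → 0 < d a' → False := by
    intro a a' haa' hda hda'
    set ε := min (d a) (d a') with hε
    have hεpos : 0 < ε := lt_min hda hda'
    have hεa : ε ≤ d a := min_le_left _ _
    have hεa' : ε ≤ d a' := min_le_right _ _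
    refine hgen a a' haa' ε hεpos (hpat _ a a' ε fun m => ?_) (hpat _ a' a ε fun m => ?_)
    · rcases eq_or_ne a m with rfl | hma
      · rw [eb_self, eb_ne (Ne.symm haa'), if_pos rfl, if_neg (Ne.symm haa'),
          abs_of_pos hda, abs_of_pos (by linarith : (0:ℝ) < d a + ε * (1 - 0))]
        ring
      · rcases eq_or_ne a' m with rfl | hma'
        · rw [eb_self, eb_ne hma, if_neg hma, if_pos rfl,
            abs_of_pos hda', abs_of_nonneg (by linarith : (0:ℝ) ≤ d a' + ε * (0 - 1))]
          ring
        · rw [eb_ne hma, eb_ne hma', if_neg hma, if_neg hma']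
          norm_num
    · rcases eq_or_ne a m with rfl | hma
      · rw [eb_self, eb_ne (Ne.symm haa'), if_neg (Ne.symm haa'), if_pos rfl,
          abs_of_pos hda, abs_of_nonneg (by linarith : (0:ℝ) ≤ d a - ε * (1 - 0))]
        ring
      · rcases eq_or_ne a' m with rfl | hma'
        · rw [eb_self, eb_ne hma, if_pos rfl, if_neg hma,
            abs_of_pos hda', abs_of_pos (by linarith : (0:ℝ) < d a' - ε * (0 - 1))]
          ring
        · rw [eb_ne hma, eb_ne hma', if_neg hma, if_neg hma']
          norm_num
  have honeneg : ∀ a a' : Fin n, a ≠ a' → d a < 0 → d a' < 0 → False := by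
    intro a a' haa' hda hda'
    set ε := min (-d a) (-d a') with hε
    have hεpos : 0 < ε := lt_min (by linarith) (by linarith)
    have hεa : ε ≤ -d a := min_le_left _ _
    have hεa' : ε ≤ -d a' := min_le_right _ _
    refine hgen a a' haa' ε hεpos (hpat _ a' a ε fun m => ?_) (hpat _ a a' ε fun m => ?_)
    · rcases eq_or_ne a m with rfl | hma
      · rw [eb_self, eb_ne (Ne.symm haa'), if_neg (Ne.symm haa'), if_pos rfl,
          abs_of_neg hda, abs_of_nonpos (by linarith : d a + ε * (1 - 0) ≤ (0:ℝ))]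
        ring
      · rcases eq_or_ne a' m with rfl | hma'
        · rw [eb_self, eb_ne hma, if_pos rfl, if_neg hma,
            abs_of_neg hda', abs_of_neg (by linarith : d a' + ε * (0 - 1) < (0:ℝ))]
          ring
        · rw [eb_ne hma, eb_ne hma', if_neg hma', if_neg hma]
          norm_num
    · rcases eq_or_ne a m with rfl | hma
      · rw [eb_self, eb_ne (Ne.symm haa'), if_pos rfl, if_neg (Ne.symm haa'),
          abs_of_neg hda, abs_of_neg (by linarith : d a - ε * (1 - 0) < (0:ℝ))]
        ring
      · rcases eq_or_ne a' m with rfl | hma'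
        · rw [eb_self, eb_ne hma, if_neg hma, if_pos rfl,
            abs_of_neg hda', abs_of_nonpos (by linarith : d a' - ε * (0 - 1) ≤ (0:ℝ))]
          ring
        · rw [eb_ne hma, eb_ne hma', if_neg hma, if_neg hma']
          norm_num
  -- extract the unique positive and negative coordinates
  have hexpos : ∃ a, 0 < d a := by
    by_contra hc
    push_neg at hc
    have : ∑ m, |d m| = -∑ m, d m := by
      rw [← Finset.sum_neg_distrib]
      exact Finset.sum_congr rfl fun m _ => abs_of_nonpos (hc m)
    rw [hmemd.1, ht2] at this
    norm_num at this
  have hexneg : ∃ b, d b < 0 := by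
    by_contra hc
    push_neg at hc
    have : ∑ m, |d m| = ∑ m, d m :=
      Finset.sum_congr rfl fun m _ => abs_of_nonneg (hc m)
    rw [hmemd.1, ht2] at this
    norm_num at this
  obtain ⟨a, hda⟩ := hexpos
  obtain ⟨b, hdb⟩ := hexneg
  have hab : a ≠ b := fun h => by rw [h] at hda; linarith
  have hzero : ∀ m, m ≠ a → m ≠ b → d m = 0 := by
    intro m hma hmb
    rcases lt_trichotomy (d m) 0 with h | h | h
    · exact absurd (honeneg m b hmb h hdb) id
    · exact h
    · exact absurd (honepos m a hma h hda) id
  have hsum_ab : d a + d b = 0 := by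
    have hs : ∑ m, d m = d a + d b := by
      rw [← Finset.sum_subset (Finset.subset_univ ({a, b} : Finset (Fin n)))
        (fun m _ hm => by
          simp only [Finset.mem_insert, Finset.mem_singleton] at hm
          push_neg at hm
          exact hzero m hm.1 hm.2)]
      exact Finset.sum_pair hab
    rw [← hs, hmemd.1]
  have habs_ab : d a - d b = 2 := by
    have hs : ∑ m, |d m| = |d a| + |d b| := by
      rw [← Finset.sum_subset (Finset.subset_univ ({a, b} : Finset (Fin n)))
        (fun m _ hm => by
          simp only [Finset.mem_insert, Finset.mem_singleton] at hm
          push_neg at hm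
          rw [hzero m hm.1 hm.2, abs_zero])]
      exact Finset.sum_pair hab
    rw [hs, abs_of_pos hda, abs_of_neg hdb] at ht2
    linarith
  have hda1 : d a = 1 := by linarith
  have hdb1 : d b = -1 := by linarith
  refine ⟨a, b, hab, fun m => ?_⟩
  show d m = _
  rcases eq_or_ne a m with rfl | hma
  · rw [eb_self, eb_ne (Ne.symm hab), hda1]; ring
  · rcases eq_or_ne b m with rfl | hmb
    · rw [eb_self, eb_ne hma, hdb1]; ring
    · rw [eb_ne hma, eb_ne hmb, hzero m (fun h => hma h.symm) (fun h => hmb h.symm)]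
      ring



variable {n : ℕ}

lemma assemble [NeZero n] (T : (Fin n → ℝ) →ₗ[ℝ] (Fin n → ℝ)) (hbij : Function.Bijective T)
    (τ : ℝ) (hτ : τ = 1 ∨ τ = -1) (σ' : Fin n → Fin n) (hinj : Function.Injective σ')
    (tvec : Fin n → ℝ)
    (key : ∀ m i, T (eb m) i = τ * eb (σ' i) m + tvec m) :
    ∃ (τ' : ℝ) (σ : Equiv.Perm (Fin n)) (t : (Fin n → ℝ) →ₗ[ℝ] ℝ),
      (τ' = 1 ∨ τ' = -1) ∧ t (fun _ => 1) ≠ -τ' ∧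
      ∀ (x : Fin n → ℝ) (i : Fin n), T x i = τ' * x (σ i) + t x := by
  have hbijσ : Function.Bijective σ' := Finite.injective_iff_bijective.mp hinj
  refine ⟨τ, Equiv.ofBijective σ' hbijσ,
    { toFun := fun x => ∑ m, tvec m * x m
      map_add' := fun x y => by
        simp only [Pi.add_apply, mul_add]
        exact Finset.sum_add_distrib
      map_smul' := fun c x => by
        simp only [Pi.smul_apply, smul_eq_mul, RingHom.id_apply, Finset.mul_sum]
        exact Finset.sum_congr rfl fun m _ => by ring }, hτ, ?_, ?_⟩
  case refine_2 =>
    intro x i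
    rw [apply_eq_sum T x i]
    have hterm : ∀ m, x m * T (eb m) i = τ * (if σ' i = m then x m else 0) + tvec m * x m := by
      intro m; rw [key m i]; unfold eb; split_ifs <;> ring
    rw [Finset.sum_congr rfl fun m _ => hterm m, Finset.sum_add_distrib, ← Finset.mul_sum,
      Finset.sum_ite_eq]
    simp only [Finset.mem_univ, if_pos]
    rfl
  case refine_1 =>
    intro hc
    simp only [LinearMap.coe_mk, AddHom.coe_mk] at hc
    have hform : ∀ x i, T x i = τ * x (σ' i) + ∑ m, tvec m * x m := by
      intro x i
      rw [apply_eq_sum T x i]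
      have hterm : ∀ m, x m * T (eb m) i = τ * (if σ' i = m then x m else 0) + tvec m * x m := by
        intro m; rw [key m i]; unfold eb; split_ifs <;> ring
      rw [Finset.sum_congr rfl fun m _ => hterm m, Finset.sum_add_distrib, ← Finset.mul_sum,
        Finset.sum_ite_eq]
      simp only [Finset.mem_univ, if_pos]
    have hT1 : T (fun _ => 1) = 0 := by
      funext i
      rw [hform (fun _ => 1) i]
      simp only [mul_one] at hc ⊢
      rw [hc]
      show τ + -τ = 0
      ring
    have h0 : (fun _ => (1:ℝ)) = (0 : Fin n → ℝ) := hbij.1 (by rw [hT1, map_zero])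
    have h1 := congrFun h0 (Classical.arbitrary (Fin n))
    norm_num at h1

end CDP

/-- A nonsingular linear transformation of `ℝⁿ` preserves the maximal distance between
coordinates iff it has the form `(Tx)_i = τ · x_{σ(i)} + t(x)` with `τ = ±1`,
`σ` a permutation and `t` a linear functional with `t(𝟙) ≠ -τ`. -/
theorem coordinate_diameter_preserving_iff_form_real
    {n : ℕ} (hn : 1 ≤ n)
    (T : (Fin n → ℝ) →ₗ[ℝ] (Fin n → ℝ)) (hbij : Function.Bijective T) :
    (∀ x : Fin n → ℝ,
        (⨆ i, ⨆ j, |T x i - T x j|) = ⨆ i, ⨆ j, |x i - x j|) ↔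
      ∃ (τ : ℝ) (σ : Equiv.Perm (Fin n)) (t : (Fin n → ℝ) →ₗ[ℝ] ℝ),
        (τ = 1 ∨ τ = -1) ∧ t (fun _ => 1) ≠ -τ ∧
        ∀ (x : Fin n → ℝ) (i : Fin n), T x i = τ * x (σ i) + t x := by
  haveI : NeZero n := ⟨by omega⟩
  constructor
  · intro hp0
    have hp : ∀ x, CDP.pd (T x) = CDP.pd x := hp0
    rcases eq_or_lt_of_le hn with h1 | h2
    · -- n = 1
      haveI hss : Subsingleton (Fin n) := by
        rw [← h1]
        infer_instance
      set i₀ : Fin n := ⟨0, by omega⟩ with hi₀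
      refine ⟨1, Equiv.refl _, (LinearMap.proj i₀).comp T - LinearMap.proj i₀,
        Or.inl rfl, ?_, ?_⟩
      · intro hc
        simp only [LinearMap.sub_apply, LinearMap.coe_comp, Function.comp_apply,
          LinearMap.proj_apply] at hc
        have hT1 : T (fun _ => 1) = 0 := funext fun i => by
          rw [Subsingleton.elim i i₀]
          show T (fun _ => 1) i₀ = 0
          linarith
        have h0 := hbij.1 (hT1.trans (map_zero T).symm)
        have h1' := congrFun h0 i₀
        norm_num at h1'
      · intro x i
        simp only [LinearMap.sub_apply, LinearMap.coe_comp, Function.comp_apply,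
          LinearMap.proj_apply, Equiv.refl_apply]
        rw [Subsingleton.elim i i₀]
        ring
    · -- n ≥ 2
      set i₀ : Fin n := ⟨0, by omega⟩ with hi₀
      set j₁ : Fin n := ⟨1, h2⟩ with hj₁
      have hji : j₁ ≠ i₀ := by simp [Fin.ext_iff, hi₀, hj₁]
      have hKP : ∀ {i j : Fin n}, i ≠ j →
          ∃ a b : Fin n, a ≠ b ∧ ∀ m, T (CDP.eb m) i - T (CDP.eb m) j
            = CDP.eb a m - CDP.eb b m :=
        fun {i j} hij => CDP.key_pair T hbij hp hij
      have hD2 : ∀ j : Fin n, ∃ a b : Fin n, j ≠ i₀ →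
          (a ≠ b ∧ ∀ m, T (CDP.eb m) j - T (CDP.eb m) i₀ = CDP.eb a m - CDP.eb b m) := by
        intro j
        by_cases h : j = i₀
        · exact ⟨i₀, i₀, fun h' => absurd h h'⟩
        · obtain ⟨a, b, hab, hd⟩ := hKP h
          exact ⟨a, b, fun _ => ⟨hab, hd⟩⟩
      choose A B hAB using hD2
      have hABne : ∀ j, j ≠ i₀ → A j ≠ B j := fun j hj => (hAB j hj).1
      have hrow : ∀ j, j ≠ i₀ → ∀ m,
          T (CDP.eb m) j - T (CDP.eb m) i₀ = CDP.eb (A j) m - CDP.eb (B j) m :=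
        fun j hj => (hAB j hj).2
      have hdiff : ∀ j k, j ≠ i₀ → k ≠ i₀ → j ≠ k → A j = A k ∨ B j = B k := by
        intro j k hj hk hjk
        obtain ⟨a, b, hab, hd⟩ := hKP hjk
        refine CDP.esub_sub (hABne j hj) (hABne k hk) hab (fun m => ?_)
        have h1 := hrow j hj m
        have h2 := hrow k hk m
        have h3 := hd m
        linarith
      have hrowne : ∀ j k, j ≠ i₀ → k ≠ i₀ → j ≠ k → ¬(A j = A k ∧ B j = B k) := by
        rintro j k hj hk hjk ⟨hA, hB⟩
        obtain ⟨a, b, hab, hd⟩ := hKP hjk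
        have h0 : T (CDP.eb a) j - T (CDP.eb a) k = 0 := by
          have h1 := hrow j hj a
          have h2 := hrow k hk a
          rw [hA, hB] at h1
          linarith
        rw [hd a, CDP.eb_self, CDP.eb_ne (Ne.symm hab)] at h0
        norm_num at h0
      by_cases hP : ∀ j k, j ≠ i₀ → k ≠ i₀ → A j = A k
      · -- all upper indices equal : τ = -1
        refine CDP.assemble T hbij (-1) (Or.inr rfl)
          (fun i => if i = i₀ then A j₁ else B i) ?_
          (fun m => T (CDP.eb m) i₀ + CDP.eb (A j₁) m) ?_
        · intro i k hfe
          have h : (if i = i₀ then A j₁ else B i) = (if k = i₀ then A j₁ else B k) := hfe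
          by_cases hi : i = i₀ <;> by_cases hk : k = i₀
          · rw [hi, hk]
          · rw [if_pos hi, if_neg hk] at h
            exact absurd ((hP k j₁ hk hji).trans h) (hABne k hk)
          · rw [if_neg hi, if_pos hk] at h
            exact absurd ((hP i j₁ hi hji).trans h.symm) (hABne i hi)
          · rw [if_neg hi, if_neg hk] at h
            by_contra hik
            exact hrowne i k hi hk hik ⟨hP i k hi hk, h⟩
        · intro m i
          by_cases hi : i = i₀
          · subst hi
            rw [if_pos rfl]
            ring
          · rw [if_neg hi]
            have h1 := hrow i hi m
            rw [hP i j₁ hi hji] at h1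
            linarith
      · -- all lower indices equal : τ = 1
        push_neg at hP
        obtain ⟨j₀, k₀, hj₀, hk₀, hA0⟩ := hP
        have hj₀k₀ : j₀ ≠ k₀ := fun h => hA0 (congrArg A h)
        have hB0 : B j₀ = B k₀ := (hdiff j₀ k₀ hj₀ hk₀ hj₀k₀).resolve_left hA0
        have hBall : ∀ l, l ≠ i₀ → B l = B j₀ := by
          intro l hl
          by_cases h1 : l = j₀
          · rw [h1]
          · by_cases h2 : l = k₀
            · rw [h2, ← hB0]
            · by_contra hne
              have e1 : A l = A j₀ := (hdiff l j₀ hl hj₀ h1).resolve_right hne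
              have e2 : A l = A k₀ :=
                (hdiff l k₀ hl hk₀ h2).resolve_right (fun h => hne (h.trans hB0.symm))
              exact hA0 (e1.symm.trans e2)
        refine CDP.assemble T hbij 1 (Or.inl rfl)
          (fun i => if i = i₀ then B j₀ else A i) ?_
          (fun m => T (CDP.eb m) i₀ - CDP.eb (B j₀) m) ?_
        · intro i k hfe
          have h : (if i = i₀ then B j₀ else A i) = (if k = i₀ then B j₀ else A k) := hfe
          by_cases hi : i = i₀ <;> by_cases hk : k = i₀
          · rw [hi, hk]
          · rw [if_pos hi, if_neg hk] at h
            exact absurd (h.symm.trans (hBall k hk).symm) (hABne k hk)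
          · rw [if_neg hi, if_pos hk] at h
            exact absurd (h.trans (hBall i hi).symm) (hABne i hi)
          · rw [if_neg hi, if_neg hk] at h
            by_contra hik
            exact hrowne i k hi hk hik ⟨h, (hBall i hi).trans (hBall k hk).symm⟩
        · intro m i
          by_cases hi : i = i₀
          · subst hi
            rw [if_pos rfl]
            ring
          · rw [if_neg hi]
            have h1 := hrow i hi m
            rw [hBall i hi] at h1
            linarith
  · rintro ⟨τ, σ, t, hτ, -, hform⟩
    intro x
    have hdiffabs : ∀ i j : Fin n, |T x i - T x j| = |x (σ i) - x (σ j)| := by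
      intro i j
      have h1 : T x i - T x j = τ * (x (σ i) - x (σ j)) := by
        rw [hform x i, hform x j]; ring
      rw [h1, abs_mul]
      rcases hτ with h | h <;> rw [h] <;> norm_num
    show CDP.pd (T x) = CDP.pd x
    apply le_antisymm
    · apply CDP.pd_le
      intro i j
      rw [hdiffabs i j]
      exact CDP.le_pd x _ _
    · apply CDP.pd_le
      intro i j
      have h1 := CDP.le_pd (T x) (σ.symm i) (σ.symm j)
      rwa [hdiffabs, σ.apply_symm_apply, σ.apply_symm_apply] at h1
end

section
/- Let X be a compact Hausdorff topological space with at least two points, let n be a positive integer, and let f₁, …, f_n ∈ C(X,ℂ). Then diam((f₁ + … + f_n)(X)) = diam(f₁(X)) + … + diam(f_n(X)) if and only if there exist points x, y ∈ X with x ≠ y and a complex number v with |v| = 1 such that f_i(x) − f_i(y) = diam(f_i(X))·v for every i = 1, …, n. -/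
open Metric Finset

lemma re_eq_abs_imp' {w : ℂ} (h : w.re = ‖w‖) : w = (w.re : ℂ) := by
  have h2 : (‖w‖)^2 = w.re^2 + w.im^2 := by
    rw [Complex.sq_norm, Complex.normSq_apply]; ring
  rw [← h] at h2
  have : w.im = 0 := by nlinarith
  exact Complex.ext rfl this

/-- For continuous functions `f₁, …, f_n` on a compact Hausdorff space `X` with at least
two points, the diameter of the range of the sum equals the sum of the diameters of the
ranges iff there are `x ≠ y` and a unimodular `v` with `fᵢ(x) - fᵢ(y) = diam(fᵢ(X)) · v`
for all `i`. -/
theorem diam_sum_eq_sum_diam_iff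
    {X : Type*} [TopologicalSpace X] [CompactSpace X] [T2Space X] [Nontrivial X]
    {n : ℕ} (hn : 1 ≤ n) (f : Fin n → C(X, ℂ)) :
    Metric.diam (Set.range ⇑(∑ i, f i)) = ∑ i, Metric.diam (Set.range ⇑(f i)) ↔
      ∃ (x y : X) (v : ℂ), x ≠ y ∧ ‖v‖ = 1 ∧
        ∀ i, f i x - f i y = (Metric.diam (Set.range ⇑(f i)) : ℂ) * v := by
  set F := ∑ i, f i with hF
  have hFapp : ∀ p : X, F p = ∑ i, f i p := by
    intro p; simp [hF]
  have hbd : ∀ i, Bornology.IsBounded (Set.range ⇑(f i)) :=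
    fun i => (isCompact_range (f i).continuous).isBounded
  have hdistle : ∀ i (p q : X), ‖f i p - f i q‖ ≤ diam (Set.range ⇑(f i)) := by
    intro i p q
    have := dist_le_diam_of_mem (hbd i) (Set.mem_range_self p) (Set.mem_range_self q)
    rwa [Complex.dist_eq] at this
  have hnonneg : 0 ≤ ∑ i, diam (Set.range ⇑(f i)) :=
    Finset.sum_nonneg fun i _ => diam_nonneg
  -- upper bound: diam(range F) ≤ ∑ diam
  have hupper : diam (Set.range ⇑F) ≤ ∑ i, diam (Set.range ⇑(f i)) := by
    apply diam_le_of_forall_dist_le hnonneg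
    rintro _ ⟨p, rfl⟩ _ ⟨q, rfl⟩
    rw [Complex.dist_eq]
    calc ‖F p - F q‖ = ‖∑ i, (f i p - f i q)‖ := by
          rw [hFapp, hFapp, Finset.sum_sub_distrib]
      _ ≤ ∑ i, ‖f i p - f i q‖ := by
          simpa using norm_sum_le Finset.univ (fun i => f i p - f i q)
      _ ≤ ∑ i, diam (Set.range ⇑(f i)) := Finset.sum_le_sum fun i _ => hdistle i p q
  constructor
  · intro h
    -- attain diameter of range F
    have hc : IsCompact (Set.range ⇑F) := isCompact_range F.continuous
    obtain ⟨x₀⟩ := (inferInstance : Nonempty X)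
    have hne : (Set.range ⇑F ×ˢ Set.range ⇑F).Nonempty :=
      ⟨(F x₀, F x₀), Set.mk_mem_prod (Set.mem_range_self _) (Set.mem_range_self _)⟩
    obtain ⟨⟨a, b⟩, hab, hmax⟩ := (hc.prod hc).exists_isMaxOn hne
      ((continuous_fst.dist continuous_snd).continuousOn :
        ContinuousOn (fun p : ℂ × ℂ => dist p.1 p.2) _)
    obtain ⟨ha, hb⟩ := hab
    have hdiam_le : diam (Set.range ⇑F) ≤ dist a b := by
      apply diam_le_of_forall_dist_le dist_nonneg
      intro p hp q hq
      exact isMaxOn_iff.mp hmax (p, q) (Set.mk_mem_prod hp hq)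
    have hdiam_eq : dist a b = diam (Set.range ⇑F) :=
      le_antisymm (dist_le_diam_of_mem hc.isBounded ha hb) hdiam_le
    obtain ⟨x, rfl⟩ := ha
    obtain ⟨y, rfl⟩ := hb
    set z : Fin n → ℂ := fun i => f i x - f i y with hz
    have hS : ‖∑ i, z i‖ = ∑ i, diam (Set.range ⇑(f i)) := by
      simp only [hz]
      rw [Finset.sum_sub_distrib, ← hFapp, ← hFapp, ← Complex.dist_eq, hdiam_eq, h]
    by_cases hS0 : (∑ i, z i) = 0
    · -- all diameters zero; all functions constant
      rw [hS0] at hS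
      simp only [norm_zero] at hS
      have hall : ∀ i, diam (Set.range ⇑(f i)) = 0 := by
        intro i
        have := (Finset.sum_eq_zero_iff_of_nonneg (fun i _ => diam_nonneg)).mp hS.symm
        exact this i (Finset.mem_univ i)
      obtain ⟨x', y', hxy'⟩ := exists_pair_ne X
      refine ⟨x', y', 1, hxy', by simp, fun i => ?_⟩
      rw [hall i]
      have h0 := hdistle i x' y'
      rw [hall i] at h0
      have : f i x' - f i y' = 0 := by
        have := le_antisymm h0 (norm_nonneg _)
        exact norm_eq_zero.mp this
      simp [this]
    · set S := ∑ i, z i with hSdef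
      set v : ℂ := S / (‖S‖ : ℂ) with hv
      have hSabs : (0:ℝ) < ‖S‖ := (norm_pos_iff.mpr hS0)
      have hvabs : ‖v‖ = 1 := by
        rw [hv, norm_div, Complex.norm_of_nonneg hSabs.le, div_self (ne_of_gt hSabs)]
      have hxy : x ≠ y := by
        rintro rfl
        apply hS0
        simp [hSdef, hz]
      refine ⟨x, y, v, hxy, hvabs, ?_⟩
      -- termwise: Re (z i * conj v) ≤ |z i| ≤ diam_i, and sums equal
      have hre_le : ∀ i ∈ Finset.univ, (z i * (starRingEnd ℂ) v).re ≤ diam (Set.range ⇑(f i)) := by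
        intro i _
        calc (z i * (starRingEnd ℂ) v).re ≤ ‖z i * (starRingEnd ℂ) v‖ :=
              Complex.re_le_norm _
          _ = ‖z i‖ := by rw [norm_mul, Complex.norm_conj, hvabs, mul_one]
          _ ≤ _ := hdistle i x y
      have hre_sum : ∑ i, (z i * (starRingEnd ℂ) v).re = ∑ i, diam (Set.range ⇑(f i)) := by
        have : ∑ i, (z i * (starRingEnd ℂ) v).re = (S * (starRingEnd ℂ) v).re := by
          rw [hSdef, Finset.sum_mul, Complex.re_sum]
        have hcast : ((‖S‖ : ℝ) : ℂ) ≠ 0 := by exact_mod_cast ne_of_gt hSabs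
        have key : S * (starRingEnd ℂ) v = ((‖S‖ : ℝ) : ℂ) := by
          rw [hv, map_div₀, Complex.conj_ofReal, mul_div_assoc']
          rw [Complex.mul_conj, Complex.normSq_eq_norm_sq, div_eq_iff hcast]
          push_cast; ring
        rw [this, key, Complex.ofReal_re, hS]
      have heach : ∀ i ∈ Finset.univ,
          (z i * (starRingEnd ℂ) v).re = diam (Set.range ⇑(f i)) :=
        (Finset.sum_eq_sum_iff_of_le hre_le).mp hre_sum
      intro i
      have h1 : (z i * (starRingEnd ℂ) v).re = diam (Set.range ⇑(f i)) :=
        heach i (Finset.mem_univ i)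
      have h2 : (z i * (starRingEnd ℂ) v).re = ‖z i * (starRingEnd ℂ) v‖ := by
        apply le_antisymm (Complex.re_le_norm _)
        rw [h1]
        calc ‖z i * (starRingEnd ℂ) v‖ = ‖z i‖ := by
              rw [norm_mul, Complex.norm_conj, hvabs, mul_one]
          _ ≤ diam (Set.range ⇑(f i)) := hdistle i x y
      have h3 : z i * (starRingEnd ℂ) v = ((diam (Set.range ⇑(f i)) : ℝ) : ℂ) := by
        rw [← h1]; exact re_eq_abs_imp' h2
      have hvv : (starRingEnd ℂ) v * v = 1 := by
        rw [mul_comm, Complex.mul_conj, Complex.normSq_eq_norm_sq, hvabs]; norm_num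
      calc f i x - f i y = z i * ((starRingEnd ℂ) v * v) := by rw [hvv, mul_one]
        _ = (z i * (starRingEnd ℂ) v) * v := by ring
        _ = _ := by rw [h3]
  · rintro ⟨x, y, v, hxy, hvabs, hval⟩
    apply le_antisymm hupper
    have : dist (F x) (F y) = ∑ i, diam (Set.range ⇑(f i)) := by
      rw [Complex.dist_eq, hFapp, hFapp, ← Finset.sum_sub_distrib]
      have : ∀ i, f i x - f i y = (diam (Set.range ⇑(f i)) : ℂ) * v := hval
      rw [Finset.sum_congr rfl fun i _ => this i, ← Finset.sum_mul, norm_mul, hvabs, mul_one]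
      rw [← Complex.ofReal_sum, Complex.norm_of_nonneg hnonneg]
    rw [← this]
    exact dist_le_diam_of_mem (isCompact_range F.continuous).isBounded
      (Set.mem_range_self x) (Set.mem_range_self y)
end

section
/- Let X be a first countable compact Hausdorff topological space with at least three points and let φ : C(X,ℂ) → C(X,ℂ) be a diameter preserving linear bijection. Then for every pair of points x, y ∈ X with x ≠ y, the set G({x,y}) = ⋂{ S(φ(f)) : f ∈ C(X,ℂ), {x,y} ∈ S(f) } is nonempty. -/
/-- `S(f)`: the set of two-element subsets `{x,y}` of `X` with
`|f(x) - f(y)| = diam(f(X))`. -/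
def diamSet {X : Type*} [TopologicalSpace X] (f : C(X, ℂ)) : Set (Set X) :=
  {s | ∃ x y : X, x ≠ y ∧ s = {x, y} ∧
    ‖f x - f y‖ = Metric.diam (Set.range ⇑f)}

/-- `T(f)`: the set of triples `(x,y,u)` with `|f(x) - f(y)| = diam(f(X))` and
`u = f(x) - f(y)`. -/
def diamTriple {X : Type*} [TopologicalSpace X] (f : C(X, ℂ)) : Set (X × X × ℂ) :=
  {p | ‖f p.1 - f p.2.1‖ = Metric.diam (Set.range ⇑f) ∧
    p.2.2 = f p.1 - f p.2.1}

/-- `G(s) = ⋂ { S(φ(f)) : f ∈ C(X,ℂ), s ∈ S(f) }`. -/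
def Gset {X : Type*} [TopologicalSpace X] (φ : C(X, ℂ) → C(X, ℂ)) (s : Set X) :
    Set (Set X) :=
  {t | ∀ f : C(X, ℂ), s ∈ diamSet f → t ∈ diamSet (φ f)}

/-- `H(x,y,u) = ⋂ { T(φ(f)) : f ∈ C(X,ℂ), (x,y,u) ∈ T(f) }`. -/
def Hset {X : Type*} [TopologicalSpace X] (φ : C(X, ℂ) → C(X, ℂ)) (x y : X) (u : ℂ) :
    Set (X × X × ℂ) :=
  {p | ∀ f : C(X, ℂ), (x, y, u) ∈ diamTriple f → p ∈ diamTriple (φ f)}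

/-- `φ` is diameter preserving: `diam(φ(f)(X)) = diam(f(X))` for all `f`. -/
def DiamPreserving {X : Type*} [TopologicalSpace X] (φ : C(X, ℂ) → C(X, ℂ)) : Prop :=
  ∀ f : C(X, ℂ), Metric.diam (Set.range ⇑(φ f)) = Metric.diam (Set.range ⇑f)

/-- The collection of two-element subsets of `X`. -/
abbrev TwoSet (X : Type*) := {s : Set X // ∃ a b : X, a ≠ b ∧ s = {a, b}}

section Auxiliary

variable {X : Type*} [TopologicalSpace X] [CompactSpace X]

/-- Distances between values of a continuous function on a compact space are bounded by
the diameter of the range. -/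
lemma my_dist_le_diam (f : C(X, ℂ)) (a b : X) :
    dist (f a) (f b) ≤ Metric.diam (Set.range ⇑f) :=
  Metric.dist_le_diam_of_mem (isCompact_range f.continuous).isBounded ⟨a, rfl⟩ ⟨b, rfl⟩

/-- The diameter of the range of a continuous function on a nonempty compact space is
attained. -/
lemma my_exists_dist_eq_diam [Nonempty X] (f : C(X, ℂ)) :
    ∃ a b : X, dist (f a) (f b) = Metric.diam (Set.range ⇑f) := by
  have hc : Continuous (fun p : X × X => dist (f p.1) (f p.2)) :=
    (f.continuous.comp continuous_fst).dist (f.continuous.comp continuous_snd)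
  obtain ⟨p, -, hp⟩ := (isCompact_univ : IsCompact (Set.univ : Set (X × X))).exists_isMaxOn
    Set.univ_nonempty hc.continuousOn
  refine ⟨p.1, p.2, le_antisymm (my_dist_le_diam f _ _) ?_⟩
  apply Metric.diam_le_of_forall_dist_le dist_nonneg
  rintro _ ⟨a, rfl⟩ _ ⟨b, rfl⟩
  simpa using hp (Set.mem_univ (a, b))

/-- Every complex number can be rotated onto the nonnegative real axis. -/
lemma my_exists_unimodular (z : ℂ) :
    ∃ c : ℂ, ‖c‖ = 1 ∧ c * z = (‖z‖ : ℂ) := by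
  rcases eq_or_ne z 0 with rfl | hz
  · exact ⟨1, by simp, by simp⟩
  · refine ⟨(‖z‖ : ℂ) / z, ?_, ?_⟩
    · rw [norm_div, Complex.norm_real, Real.norm_eq_abs, abs_of_nonneg (norm_nonneg z),
        div_self (norm_ne_zero_iff.mpr hz)]
    · exact div_mul_cancel₀ _ hz

/-- Membership of the pair `{x,y}` in `diamSet f` in explicit form. -/
lemma my_pair_mem_diamSet_iff (f : C(X, ℂ)) {x y : X} (hxy : x ≠ y) :
    ({x, y} : Set X) ∈ diamSet f ↔
      ‖f x - f y‖ = Metric.diam (Set.range ⇑f) := by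
  constructor
  · rintro ⟨x', y', hne', heq, habs⟩
    rcases Set.pair_eq_pair_iff.1 heq with ⟨h1, h2⟩ | ⟨h1, h2⟩
    · rw [h1, h2]; exact habs
    · rw [h1, h2, norm_sub_rev]; exact habs
  · intro h
    exact ⟨x, y, hxy, rfl, h⟩

end Auxiliary

/-- Step 1 (first part): for a diameter preserving linear bijection of `C(X,ℂ)` on a
first countable compact Hausdorff space with at least three points, the set
`G({x,y})` is nonempty for every pair `x ≠ y`. -/
theorem Gset_nonempty
    {X : Type*} [TopologicalSpace X] [CompactSpace X] [T2Space X]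
    [FirstCountableTopology X]
    (h3 : ∃ a b c : X, a ≠ b ∧ a ≠ c ∧ b ≠ c)
    (φ : C(X, ℂ) →ₗ[ℂ] C(X, ℂ)) (hbij : Function.Bijective φ)
    (hdp : DiamPreserving (⇑φ)) (x y : X) (hxy : x ≠ y) :
    (Gset (⇑φ) ({x, y} : Set X)).Nonempty := by
  obtain ⟨a0, -, -, -, -, -⟩ := h3
  haveI : Nonempty X := ⟨a0⟩
  -- The index type: functions attaining their diameter at the pair (x, y).
  let ι := {f : C(X, ℂ) // ‖f x - f y‖ = Metric.diam (Set.range ⇑f)}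
  -- The closed sets whose intersection we study.
  let C : ι → Set (X × X) := fun i =>
    {p | dist (φ i.1 p.1) (φ i.1 p.2) = Metric.diam (Set.range ⇑(φ i.1))}
  have hCclosed : ∀ i, IsClosed (C i) := fun i =>
    isClosed_eq (((φ i.1).continuous.comp continuous_fst).dist
      ((φ i.1).continuous.comp continuous_snd)) continuous_const
  -- choose unimodular rotations
  choose c hc1 hc2 using fun i : ι => my_exists_unimodular (i.1 x - i.1 y)
  -- finite intersection property
  have hFIP : ∀ u : Finset ι, (Set.univ ∩ ⋂ i ∈ u, C i).Nonempty := by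
    intro u
    set g : C(X, ℂ) := ∑ i ∈ u, c i • (i.1 : C(X, ℂ)) with hg
    have hgapp : ∀ a : X, g a = ∑ i ∈ u, c i * i.1 a := by
      intro a
      simp [hg, ContinuousMap.sum_apply, smul_eq_mul]
    set D : ℝ := ∑ i ∈ u, Metric.diam (Set.range ⇑(i.1 : C(X, ℂ))) with hD
    have hD0 : 0 ≤ D := Finset.sum_nonneg fun i _ => Metric.diam_nonneg
    have hgxy : g x - g y = (D : ℂ) := by
      rw [hgapp, hgapp, ← Finset.sum_sub_distrib, hD, Complex.ofReal_sum]
      refine Finset.sum_congr rfl fun i _ => ?_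
      rw [← mul_sub, hc2 i, ← i.2]
    have hdiamle : Metric.diam (Set.range ⇑g) ≤ D := by
      apply Metric.diam_le_of_forall_dist_le hD0
      rintro _ ⟨a, rfl⟩ _ ⟨b, rfl⟩
      rw [Complex.dist_eq, hgapp, hgapp, ← Finset.sum_sub_distrib]
      calc ‖∑ i ∈ u, (c i * i.1 a - c i * i.1 b)‖
          ≤ ∑ i ∈ u, ‖c i * i.1 a - c i * i.1 b‖ :=
            norm_sum_le _ _
        _ ≤ D := by
            rw [hD]
            refine Finset.sum_le_sum fun i _ => ?_
            rw [← mul_sub, norm_mul, hc1 i, one_mul, ← Complex.dist_eq]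
            exact my_dist_le_diam _ _ _
    have hdiamg : Metric.diam (Set.range ⇑g) = D := by
      refine le_antisymm hdiamle ?_
      calc D = ‖g x - g y‖ := by
              rw [hgxy, Complex.norm_real, Real.norm_eq_abs, abs_of_nonneg hD0]
        _ = dist (g x) (g y) := (Complex.dist_eq _ _).symm
        _ ≤ _ := my_dist_le_diam g x y
    have hφg : ∀ a : X, φ g a = ∑ i ∈ u, c i * φ i.1 a := by
      intro a
      rw [hg, map_sum]
      simp [ContinuousMap.sum_apply, map_smul, smul_eq_mul]
    have hdφg : Metric.diam (Set.range ⇑(φ g)) = D := by rw [hdp g, hdiamg]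
    obtain ⟨a, b, hab⟩ := my_exists_dist_eq_diam (φ g)
    have h1 : ∀ i ∈ u, dist ((φ i.1) a) ((φ i.1) b) ≤ Metric.diam (Set.range ⇑(φ i.1)) :=
      fun i _ => my_dist_le_diam _ _ _
    have h2 : ∑ i ∈ u, Metric.diam (Set.range ⇑(φ i.1)) = D := by
      rw [hD]; exact Finset.sum_congr rfl fun i _ => hdp i.1
    have h3' : D ≤ ∑ i ∈ u, dist ((φ i.1) a) ((φ i.1) b) := by
      calc D = dist (φ g a) (φ g b) := by rw [hab, hdφg]
        _ = ‖∑ i ∈ u, (c i * φ i.1 a - c i * φ i.1 b)‖ := by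
              rw [Complex.dist_eq, hφg, hφg, ← Finset.sum_sub_distrib]
        _ ≤ ∑ i ∈ u, ‖c i * φ i.1 a - c i * φ i.1 b‖ :=
              norm_sum_le _ _
        _ = ∑ i ∈ u, dist ((φ i.1) a) ((φ i.1) b) := by
              refine Finset.sum_congr rfl fun i _ => ?_
              rw [← mul_sub, norm_mul, hc1 i, one_mul, Complex.dist_eq]
    have h4 : ∑ i ∈ u, dist ((φ i.1) a) ((φ i.1) b)
        = ∑ i ∈ u, Metric.diam (Set.range ⇑(φ i.1)) :=
      le_antisymm (Finset.sum_le_sum h1) (by rw [h2]; exact h3')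
    have h5 := (Finset.sum_eq_sum_iff_of_le h1).1 h4
    refine ⟨(a, b), Set.mem_univ _, ?_⟩
    simp only [Set.mem_iInter]
    intro i hi
    exact h5 i hi
  -- conclude the whole family has nonempty intersection
  have hne : (⋂ i, C i).Nonempty := by
    by_contra h
    rw [Set.not_nonempty_iff_eq_empty] at h
    obtain ⟨u, hu⟩ := (isCompact_univ :
      IsCompact (Set.univ : Set (X × X))).elim_finite_subfamily_closed C hCclosed
      (by rw [Set.univ_inter]; exact h)
    exact (hFIP u).ne_empty hu
  obtain ⟨⟨a, b⟩, habmem⟩ := hne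
  rw [Set.mem_iInter] at habmem
  have habC : ∀ i : ι, dist (φ i.1 a) (φ i.1 b) = Metric.diam (Set.range ⇑(φ i.1)) :=
    fun i => habmem i
  -- a Urysohn function separating x and y
  obtain ⟨f0r, hf0x, hf0y, hf0m⟩ := exists_continuous_zero_one_of_isClosed
    (isClosed_singleton : IsClosed ({x} : Set X))
    (isClosed_singleton : IsClosed ({y} : Set X))
    (Set.disjoint_singleton.2 hxy)
  set f0 : C(X, ℂ) := ⟨fun a => (f0r a : ℂ),
    Complex.continuous_ofReal.comp f0r.continuous⟩ with hf0def
  have hf0xv : f0 x = 0 := by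
    simp [hf0def, show f0r x = 0 from hf0x rfl]
  have hf0yv : f0 y = 1 := by
    simp [hf0def, show f0r y = 1 from hf0y rfl]
  have hf0abs : ‖f0 x - f0 y‖ = 1 := by
    rw [hf0xv, hf0yv]; simp
  have hf0diam : Metric.diam (Set.range ⇑f0) = 1 := by
    refine le_antisymm ?_ ?_
    · apply Metric.diam_le_of_forall_dist_le zero_le_one
      rintro _ ⟨p, rfl⟩ _ ⟨q, rfl⟩
      have hp := hf0m p
      have hq := hf0m q
      have : f0 p - f0 q = ((f0r p - f0r q : ℝ) : ℂ) := by
        simp [hf0def]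
      rw [Complex.dist_eq, this, Complex.norm_real, Real.norm_eq_abs]
      rw [abs_le]
      constructor <;> [linarith [hp.1, hp.2, hq.1, hq.2]; linarith [hp.1, hp.2, hq.1, hq.2]]
    · calc (1 : ℝ) = ‖f0 x - f0 y‖ := hf0abs.symm
        _ = dist (f0 x) (f0 y) := (Complex.dist_eq _ _).symm
        _ ≤ _ := my_dist_le_diam f0 x y
  have hi0 : ‖f0 x - f0 y‖ = Metric.diam (Set.range ⇑f0) := by
    rw [hf0abs, hf0diam]
  -- a ≠ b
  have hab_ne : a ≠ b := by
    intro hEq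
    have := habC ⟨f0, hi0⟩
    rw [hEq, dist_self] at this
    rw [hdp f0, hf0diam] at this
    exact one_ne_zero this.symm
  -- conclude
  refine ⟨{a, b}, ?_⟩
  intro f hf
  have hfd : ‖f x - f y‖ = Metric.diam (Set.range ⇑f) :=
    (my_pair_mem_diamSet_iff f hxy).1 hf
  refine ⟨a, b, hab_ne, rfl, ?_⟩
  rw [← Complex.dist_eq]
  exact habC ⟨f, hfd⟩
end

section
/- Let X be a first countable compact Hausdorff topological space with at least three points and let φ : C(X,ℂ) → C(X,ℂ) be a diameter preserving linear bijection. Then for every pair of points x, y ∈ X with x ≠ y and every nonzero complex number u, the set H(x,y,u) = ⋂{ T(φ(f)) : f ∈ C(X,ℂ), (x,y,u) ∈ T(f) } is nonempty. -/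
set_option maxHeartbeats 1000000

open Metric Set

lemma diam_attained {s : Set ℂ} (hs : IsCompact s) (hne : s.Nonempty) :
    ∃ a ∈ s, ∃ b ∈ s, dist a b = Metric.diam s := by
  have hF : ContinuousOn (fun q : ℂ × ℂ => dist q.1 q.2) (s ×ˢ s) :=
    (continuous_fst.dist continuous_snd).continuousOn
  obtain ⟨p, hp, hmax⟩ := (hs.prod hs).exists_isMaxOn (hne.prod hne) hF
  refine ⟨p.1, hp.1, p.2, hp.2, le_antisymm (dist_le_diam_of_mem hs.isBounded hp.1 hp.2) ?_⟩
  refine Metric.diam_le_of_forall_dist_le dist_nonneg fun a ha b hb => ?_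
  exact hmax (Set.mk_mem_prod ha hb)

lemma dist_le_diam_range {X : Type*} [TopologicalSpace X] [CompactSpace X]
    (f : C(X, ℂ)) (a b : X) : dist (f a) (f b) ≤ Metric.diam (Set.range ⇑f) :=
  dist_le_diam_of_mem (isCompact_range f.continuous).isBounded
    (mem_range_self a) (mem_range_self b)

lemma isClosed_diamTriple {X : Type*} [TopologicalSpace X] (g : C(X, ℂ)) :
    IsClosed (diamTriple g) := by
  have h1 : Continuous fun p : X × X × ℂ => g p.1 - g p.2.1 :=
    (g.continuous.comp continuous_fst).sub
      (g.continuous.comp (continuous_fst.comp continuous_snd))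
  have : diamTriple g =
      {p : X × X × ℂ | ‖g p.1 - g p.2.1‖ = Metric.diam (Set.range ⇑g)} ∩
      {p : X × X × ℂ | p.2.2 = g p.1 - g p.2.1} := by
    ext p; simp [diamTriple, Set.mem_setOf_eq, Set.mem_inter_iff]
  rw [this]
  exact (isClosed_eq (continuous_norm.comp h1) continuous_const).inter
    (isClosed_eq (continuous_snd.comp continuous_snd) h1)

/-- Step 1 (second part): for a diameter preserving linear bijection of `C(X,ℂ)` on a
first countable compact Hausdorff space with at least three points, the set
`H(x,y,u)` is nonempty for every pair `x ≠ y` and every `u ≠ 0`. -/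
theorem Hset_nonempty
    {X : Type*} [TopologicalSpace X] [CompactSpace X] [T2Space X]
    [FirstCountableTopology X]
    (h3 : ∃ a b c : X, a ≠ b ∧ a ≠ c ∧ b ≠ c)
    (φ : C(X, ℂ) →ₗ[ℂ] C(X, ℂ)) (hbij : Function.Bijective φ)
    (hdp : DiamPreserving (⇑φ)) (x y : X) (hxy : x ≠ y) (u : ℂ) (hu : u ≠ 0) :
    (Hset (⇑φ) x y u).Nonempty := by
  classical
  obtain ⟨a, -, -, -, -, -⟩ := h3
  set d : ℝ := ‖u‖ with hd_def
  have hd : 0 < d := by simpa [hd_def] using (norm_pos_iff.mpr hu)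
  set ι := {f : C(X, ℂ) // (x, y, u) ∈ diamTriple f} with hι
  set K : Set (X × X × ℂ) := univ ×ˢ univ ×ˢ Metric.sphere (0 : ℂ) d with hK_def
  have hK : IsCompact K :=
    isCompact_univ.prod (isCompact_univ.prod (isCompact_sphere 0 d))
  set Z : ι → Set (X × X × ℂ) := fun i => diamTriple (φ i.1) with hZ_def
  have hZc : ∀ i, IsClosed (Z i) := fun i => isClosed_diamTriple _
  -- each f in the index set has diameter d
  have hidiam : ∀ i : ι, Metric.diam (Set.range ⇑(i.1 : C(X, ℂ))) = d := by
    rintro ⟨f, hf1, hf2⟩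
    have hf1' : ‖f x - f y‖ = Metric.diam (Set.range ⇑f) := hf1
    have hf2' : u = f x - f y := hf2
    show Metric.diam (Set.range ⇑f) = ‖u‖
    rw [← hf1', ← hf2']
  have hiu : ∀ i : ι, (i.1 : C(X, ℂ)) x - (i.1 : C(X, ℂ)) y = u := fun i => i.2.2.symm
  -- finite intersection property
  have hfin : ∀ t : Finset ι, (K ∩ ⋂ i ∈ t, Z i).Nonempty := by
    intro t
    rcases eq_or_ne t ∅ with rfl | htne
    · refine ⟨(a, a, u), ?_, by simp⟩
      refine ⟨mem_univ _, mem_univ _, ?_⟩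
      simp [hd_def, Complex.dist_eq]
    have hcard : 1 ≤ t.card := Finset.card_pos.mpr (Finset.nonempty_of_ne_empty htne)
    set n : ℕ := t.card with hn
    set g : C(X, ℂ) := ∑ i ∈ t, (i.1 : C(X, ℂ)) with hg
    have hgapp : ∀ z : X, g z = ∑ i ∈ t, (i.1 : C(X, ℂ)) z := by
      intro z; simp [hg]
    have hgxy : g x - g y = (n : ℂ) * u := by
      rw [hgapp, hgapp, ← Finset.sum_sub_distrib]
      have : ∀ i ∈ t, (i.1 : C(X, ℂ)) x - (i.1 : C(X, ℂ)) y = u := fun i _ => hiu i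
      rw [Finset.sum_congr rfl this, Finset.sum_const, nsmul_eq_mul]
    -- diameter of g
    have hdg_le : Metric.diam (Set.range ⇑g) ≤ n * d := by
      refine Metric.diam_le_of_forall_dist_le (by positivity) ?_
      rintro _ ⟨p, rfl⟩ _ ⟨q, rfl⟩
      rw [hgapp, hgapp]
      calc dist (∑ i ∈ t, (i.1 : C(X, ℂ)) p) (∑ i ∈ t, (i.1 : C(X, ℂ)) q)
          ≤ ∑ i ∈ t, dist ((i.1 : C(X, ℂ)) p) ((i.1 : C(X, ℂ)) q) :=
            dist_sum_sum_le _ _ _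
        _ ≤ ∑ i ∈ t, d := Finset.sum_le_sum fun i _ => by
            rw [← hidiam i]; exact dist_le_diam_range _ _ _
        _ = n * d := by rw [Finset.sum_const, nsmul_eq_mul]
    have hdg_ge : (n : ℝ) * d ≤ Metric.diam (Set.range ⇑g) := by
      have := dist_le_diam_range g x y
      rwa [Complex.dist_eq, hgxy, norm_mul, Complex.norm_natCast, ← hd_def] at this
    have hdg : Metric.diam (Set.range ⇑g) = n * d := le_antisymm hdg_le hdg_ge
    have hdφg : Metric.diam (Set.range ⇑(φ g)) = n * d := by rw [hdp g, hdg]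
    -- attain the diameter of φ g
    have : Nonempty X := ⟨a⟩
    obtain ⟨z1, hz1, z2, hz2, hz⟩ := diam_attained
      (isCompact_range (φ g).continuous) (range_nonempty _)
    obtain ⟨p, rfl⟩ := hz1
    obtain ⟨q, rfl⟩ := hz2
    rw [hdφg] at hz
    -- the summands
    set A : ι → ℂ := fun i => (φ i.1) p - (φ i.1) q with hA
    have hφgsum : ∀ z : X, (φ g) z = ∑ i ∈ t, (φ i.1) z := by
      intro z
      have : φ g = ∑ i ∈ t, φ i.1 := by rw [hg, map_sum]
      rw [this]; simp
    have hsumA : ∑ i ∈ t, A i = (φ g) p - (φ g) q := by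
      rw [hφgsum, hφgsum, ← Finset.sum_sub_distrib]
    set w : ℂ := (φ g) p - (φ g) q with hw_def
    have hw : ‖w‖ = n * d := by
      rw [hw_def, ← Complex.dist_eq, hz]
    have hAle : ∀ i : ι, ‖A i‖ ≤ d := by
      intro i
      have := dist_le_diam_range (φ i.1) p q
      rwa [Complex.dist_eq, hdp, hidiam i] at this
    -- key claim: every A i equals w / n
    have hkey : ∀ i ∈ t, (n : ℂ) * A i = w := by
      intro i hi
      set B : ℂ := w - A i with hB_def
      have hAB : A i + B = w := by ring
      have hBle : ‖B‖ ≤ (n - 1) * d := by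
        have : B = ∑ j ∈ t.erase i, A j := by
          rw [hB_def, ← hsumA, ← Finset.add_sum_erase t A hi]; ring
        rw [this]
        calc ‖∑ j ∈ t.erase i, A j‖
            ≤ ∑ j ∈ t.erase i, ‖A j‖ := by
              simpa using norm_sum_le (t.erase i) A
          _ ≤ ∑ j ∈ t.erase i, d := Finset.sum_le_sum fun j _ => hAle j
          _ = (n - 1) * d := by
              rw [Finset.sum_const, nsmul_eq_mul, Finset.card_erase_of_mem hi,
                Nat.cast_sub hcard, Nat.cast_one]
      have hAeq : ‖A i‖ = d := by
        have h1 : (n : ℝ) * d ≤ ‖A i‖ + ‖B‖ := by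
          rw [← hw, ← hAB]; exact norm_add_le _ _
        nlinarith [hAle i]
      have hBeq : ‖B‖ = (n - 1) * d := by
        have h1 : (n : ℝ) * d ≤ ‖A i‖ + ‖B‖ := by
          rw [← hw, ← hAB]; exact norm_add_le _ _
        nlinarith
      have hnormadd : ‖A i + B‖ = ‖A i‖ + ‖B‖ := by
        rw [
          hAB, hw, hAeq, hBeq]; ring
      rcases eq_or_ne B 0 with hB0 | hB0
      · -- then w = A i and n = 1
        have hwA : w = A i := by rw [← hAB, hB0, add_zero]
        have hn1 : (n : ℝ) * d = d := by rw [← hw, hwA, hAeq]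
        have : (n : ℝ) = 1 :=
          mul_right_cancel₀ hd.ne' (hn1.trans (one_mul d).symm)
        have hn1' : (n : ℂ) = 1 := by exact_mod_cast this
        rw [hn1', one_mul, hwA]
      · have hA0 : A i ≠ 0 := by
          intro h; rw [h, norm_zero] at hAeq; exact hd.ne hAeq
        have hsr : SameRay ℝ (A i) B := sameRay_iff_norm_add.mpr hnormadd
        obtain ⟨r, hr, hBr⟩ := hsr.exists_pos_left hA0 hB0
        have hwr : w = (1 + r) • A i := by
          rw [← hAB, ← hBr, add_smul, one_smul]
        have habs : (n : ℝ) * d = (1 + r) * d := by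
          rw [← hw, hwr]
          rw [Complex.real_smul, norm_mul, hAeq, Complex.norm_real, Real.norm_eq_abs,
            abs_of_pos (by linarith)]
        have hrn : 1 + r = (n : ℝ) := by
          have := mul_right_cancel₀ hd.ne' habs
          linarith
        rw [hwr, hrn, Complex.real_smul]
        norm_cast
    -- the common value
    have hn0 : (n : ℂ) ≠ 0 :=
      Nat.cast_ne_zero.mpr (Nat.one_le_iff_ne_zero.mp hcard)
    have hn0R : (n : ℝ) ≠ 0 :=
      Nat.cast_ne_zero.mpr (Nat.one_le_iff_ne_zero.mp hcard)
    set v : ℂ := w / n with hv_def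
    have hAv : ∀ i ∈ t, A i = v := by
      intro i hi
      rw [hv_def, ← hkey i hi, mul_comm, mul_div_assoc, div_self hn0, mul_one]
    refine ⟨(p, q, v), ⟨mem_univ _, mem_univ _, ?_⟩, ?_⟩
    · -- v on the sphere
      simp only [mem_sphere_iff_norm, sub_zero, hv_def,
        norm_div, hw, Complex.norm_natCast]
      rw [mul_comm, mul_div_assoc, div_self hn0R, mul_one]
    · simp only [Set.mem_iInter]
      intro i hi
      have h1 : ‖A i‖ = d := by
        rw [hAv i hi, hv_def, norm_div, hw, Complex.norm_natCast]
        rw [mul_comm, mul_div_assoc, div_self hn0R, mul_one]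
      refine ⟨?_, ?_⟩
      · calc ‖(φ i.1) p - (φ i.1) q‖ = d := h1
          _ = Metric.diam (Set.range ⇑(φ i.1)) := by rw [hdp, hidiam i]
      · exact (hAv i hi).symm
  -- conclude by compactness
  by_contra hemp
  rw [Set.not_nonempty_iff_eq_empty] at hemp
  have hKZ : K ∩ ⋂ i, Z i = ∅ := by
    rw [Set.eq_empty_iff_forall_notMem]
    rintro P ⟨-, hP⟩
    have : P ∈ Hset (⇑φ) x y u := by
      intro f hf
      exact Set.mem_iInter.mp hP ⟨f, hf⟩
    rw [hemp] at this
    exact this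
  obtain ⟨t, ht⟩ := hK.elim_finite_subfamily_closed Z hZc hKZ
  exact (hfin t).ne_empty ht
end

section
/- Let X be a first countable compact Hausdorff topological space with at least three points and let φ : C(X,ℂ) → C(X,ℂ) be a diameter preserving linear bijection. If {x₁,y₁} and {x₂,y₂} are two distinct two-element subsets of X, then G({x₁,y₁}) ∩ G({x₂,y₂}) = ∅. -/
/-- Auxiliary: `diam(range F) = c` when `F` is the complexification of a real function
with values in `[0, c]` attaining both `0` and `c`. -/
lemma diam_cplx_range {X : Type*} [TopologicalSpace X] [CompactSpace X]
    (F : C(X, ℂ)) (r : C(X, ℝ)) (hF : ∀ x, F x = (r x : ℂ))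
    (c : ℝ) (hc : 0 ≤ c) (hrange : ∀ x, r x ∈ Set.Icc 0 c)
    {p q : X} (hp : r p = c) (hq : r q = 0) :
    Metric.diam (Set.range ⇑F) = c := by
  apply le_antisymm
  · apply Metric.diam_le_of_forall_dist_le hc
    rintro _ ⟨x, rfl⟩ _ ⟨y, rfl⟩
    rw [hF x, hF y, Complex.isometry_ofReal.dist_eq, Real.dist_eq]
    have hx := hrange x; have hy := hrange y
    rw [abs_le]
    constructor
    · linarith [hx.1, hy.2]
    · linarith [hx.2, hy.1]
  · have hb : Bornology.IsBounded (Set.range ⇑F) :=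
      (isCompact_range F.continuous).isBounded
    have h := Metric.dist_le_diam_of_mem hb (Set.mem_range_self p) (Set.mem_range_self q)
    rwa [hF p, hF q, Complex.isometry_ofReal.dist_eq, Real.dist_eq, hp, hq, sub_zero,
      abs_of_nonneg hc] at h

/-- Auxiliary: extracting the diameter identity from pair membership in `diamSet`. -/
lemma abs_sub_eq_diam_of_pair_mem {X : Type*} [TopologicalSpace X] {g : C(X, ℂ)} {a b : X}
    (h : ({a, b} : Set X) ∈ diamSet g) :
    ‖g a - g b‖ = Metric.diam (Set.range ⇑g) := by
  obtain ⟨x, y, hxy, hpair, habs⟩ := h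
  rcases Set.pair_eq_pair_iff.mp hpair with ⟨rfl, rfl⟩ | ⟨rfl, rfl⟩
  · exact habs
  · rwa [← neg_sub, norm_neg] at habs

/-- The key case of the theorem: the second pair's distinguished point `x₂` lies outside
the first pair, and `x₁ ≠ y₂`. -/
lemma Gset_disjoint_key
    {X : Type*} [TopologicalSpace X] [CompactSpace X] [T2Space X]
    (φ : C(X, ℂ) →ₗ[ℂ] C(X, ℂ)) (hdp : DiamPreserving (⇑φ))
    (x₁ y₁ x₂ y₂ : X) (h₁ : x₁ ≠ y₁) (h₂ : x₂ ≠ y₂)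
    (hx : x₂ ≠ x₁) (hy : x₂ ≠ y₁) (hz : x₁ ≠ y₂) :
    Gset (⇑φ) ({x₁, y₁} : Set X) ∩ Gset (⇑φ) ({x₂, y₂} : Set X) = ∅ := by
  ext t
  simp only [Set.mem_inter_iff, Set.mem_empty_iff_false, iff_false, not_and]
  intro ht₁ ht₂
  -- Urysohn functions
  have hcl₁ : IsClosed ({y₁, y₂} : Set X) := by
    rw [Set.insert_eq]; exact isClosed_singleton.union isClosed_singleton
  have hcl₂ : IsClosed ({x₁, x₂} : Set X) := by
    rw [Set.insert_eq]; exact isClosed_singleton.union isClosed_singleton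
  have hdisj : Disjoint ({y₁, y₂} : Set X) ({x₁, x₂} : Set X) := by
    rw [Set.disjoint_iff_forall_ne]
    rintro u hu v hv rfl
    rcases hu with rfl | rfl <;> rcases hv with rfl | rfl
    · exact h₁ rfl
    · exact hy rfl
    · exact hz rfl
    · exact h₂ rfl
  obtain ⟨f₀, hf₀0, hf₀1, hf₀I⟩ := exists_continuous_zero_one_of_isClosed hcl₁ hcl₂ hdisj
  have hcl₃ : IsClosed ({x₂} : Set X) := isClosed_singleton
  have hcl₄ : IsClosed ({x₁} : Set X) := isClosed_singleton
  have hdisj' : Disjoint ({x₂} : Set X) ({x₁} : Set X) := by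
    simp [Set.disjoint_singleton, hx]
  obtain ⟨l₀, hl₀0, hl₀1, hl₀I⟩ := exists_continuous_zero_one_of_isClosed hcl₃ hcl₄ hdisj'
  -- values of f₀ and k₀ := f₀ * l₀
  have hfx₁ : f₀ x₁ = 1 := hf₀1 (Set.mem_insert _ _)
  have hfx₂ : f₀ x₂ = 1 := hf₀1 (Set.mem_insert_of_mem _ rfl)
  have hfy₁ : f₀ y₁ = 0 := hf₀0 (Set.mem_insert _ _)
  have hfy₂ : f₀ y₂ = 0 := hf₀0 (Set.mem_insert_of_mem _ rfl)
  have hlx₁ : l₀ x₁ = 1 := hl₀1 rfl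
  have hlx₂ : l₀ x₂ = 0 := hl₀0 rfl
  set k₀ : C(X, ℝ) := f₀ * l₀ with hk₀
  have hk₀x₁ : k₀ x₁ = 1 := by simp [hk₀, hfx₁, hlx₁]
  have hk₀y₁ : k₀ y₁ = 0 := by simp [hk₀, hfy₁]
  have hk₀x₂ : k₀ x₂ = 0 := by simp [hk₀, hlx₂]
  have hk₀y₂ : k₀ y₂ = 0 := by simp [hk₀, hfy₂]
  have hk₀I : ∀ x, k₀ x ∈ Set.Icc (0:ℝ) 1 := by
    intro x
    have h1 := hf₀I x; have h2 := hl₀I x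
    constructor
    · exact mul_nonneg h1.1 h2.1
    · calc f₀ x * l₀ x ≤ 1 * 1 := mul_le_mul h1.2 h2.2 h2.1 zero_le_one
        _ = 1 := one_mul 1
  have hk₀le : ∀ x, k₀ x ≤ f₀ x := by
    intro x
    have h1 := hf₀I x; have h2 := hl₀I x
    calc f₀ x * l₀ x ≤ f₀ x * 1 := mul_le_mul_of_nonneg_left h2.2 h1.1
      _ = f₀ x := mul_one _
  -- complexifications
  set F : C(X, ℂ) := ⟨fun x => (f₀ x : ℂ), Complex.continuous_ofReal.comp f₀.continuous⟩ with hFdef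
  set K : C(X, ℂ) := ⟨fun x => (k₀ x : ℂ), Complex.continuous_ofReal.comp k₀.continuous⟩ with hKdef
  have hFapp : ∀ x, F x = (f₀ x : ℂ) := fun x => rfl
  have hKapp : ∀ x, K x = (k₀ x : ℂ) := fun x => rfl
  -- diameters
  have hdF : Metric.diam (Set.range ⇑F) = 1 :=
    diam_cplx_range F f₀ hFapp 1 zero_le_one hf₀I hfx₁ hfy₁
  have hdK : Metric.diam (Set.range ⇑K) = 1 :=
    diam_cplx_range K k₀ hKapp 1 zero_le_one hk₀I hk₀x₁ hk₀y₁
  have hdFK : Metric.diam (Set.range ⇑(F + K)) = 2 := by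
    apply diam_cplx_range (F + K) (f₀ + k₀)
      (fun x => by simp [ContinuousMap.add_apply, hFapp x, hKapp x]) 2 (by norm_num)
    · intro x
      have h1 := hf₀I x; have h2 := hk₀I x
      simp only [ContinuousMap.add_apply]
      constructor
      · linarith [h1.1, h2.1]
      · linarith [h1.2, h2.2]
    · show f₀ x₁ + k₀ x₁ = 2
      rw [hfx₁, hk₀x₁]; norm_num
    · show f₀ y₁ + k₀ y₁ = 0
      rw [hfy₁, hk₀y₁]; norm_num
  have hdFmK : Metric.diam (Set.range ⇑(F - K)) = 1 := by
    apply diam_cplx_range (F - K) (f₀ - k₀)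
      (fun x => by simp [ContinuousMap.sub_apply, hFapp x, hKapp x]) 1 zero_le_one
    · intro x
      have h1 := hf₀I x; have h2 := hk₀I x; have h3 := hk₀le x
      simp only [ContinuousMap.sub_apply]
      constructor
      · linarith
      · linarith [h1.2, h2.1]
    · show f₀ x₂ - k₀ x₂ = 1
      rw [hfx₂, hk₀x₂]; norm_num
    · show f₀ y₂ - k₀ y₂ = 0
      rw [hfy₂, hk₀y₂]; norm_num
  -- pair memberships
  have memF : ({x₁, y₁} : Set X) ∈ diamSet F := by
    refine ⟨x₁, y₁, h₁, rfl, ?_⟩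
    rw [hdF, hFapp, hFapp, hfx₁, hfy₁]
    norm_num
  have memK : ({x₁, y₁} : Set X) ∈ diamSet K := by
    refine ⟨x₁, y₁, h₁, rfl, ?_⟩
    rw [hdK, hKapp, hKapp, hk₀x₁, hk₀y₁]
    norm_num
  have memFK : ({x₁, y₁} : Set X) ∈ diamSet (F + K) := by
    refine ⟨x₁, y₁, h₁, rfl, ?_⟩
    rw [hdFK]
    simp only [ContinuousMap.add_apply, hFapp, hKapp, hfx₁, hfy₁, hk₀x₁, hk₀y₁]
    norm_num
  have memFmK : ({x₂, y₂} : Set X) ∈ diamSet (F - K) := by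
    refine ⟨x₂, y₂, h₂, rfl, ?_⟩
    rw [hdFmK]
    simp only [ContinuousMap.sub_apply, hFapp, hKapp, hfx₂, hfy₂, hk₀x₂, hk₀y₂]
    norm_num
  -- apply the Gset hypotheses
  obtain ⟨a, b, hab, rfl, habsF⟩ := ht₁ F memF
  rw [hdp F, hdF] at habsF
  have habsK : ‖φ K a - φ K b‖ = 1 := by
    have h := abs_sub_eq_diam_of_pair_mem (ht₁ K memK)
    rwa [hdp K, hdK] at h
  have habsFK : ‖(φ F a - φ F b) + (φ K a - φ K b)‖ = 2 := by
    have h := abs_sub_eq_diam_of_pair_mem (ht₁ (F + K) memFK)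
    rw [hdp (F + K), hdFK] at h
    have hφ : φ (F + K) = φ F + φ K := map_add φ F K
    rw [hφ] at h
    simp only [ContinuousMap.add_apply] at h
    rw [← h]
    congr 1
    ring
  have habsFmK : ‖(φ F a - φ F b) - (φ K a - φ K b)‖ = 1 := by
    have h := abs_sub_eq_diam_of_pair_mem (ht₂ (F - K) memFmK)
    rw [hdp (F - K), hdFmK] at h
    have hφ : φ (F - K) = φ F - φ K := map_sub φ F K
    rw [hφ] at h
    simp only [ContinuousMap.sub_apply] at h
    rw [← h]
    congr 1
    ring
  -- parallelogram law contradiction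
  set A := φ F a - φ F b
  set B := φ K a - φ K b
  have hplaw := parallelogram_law_with_norm ℝ A B
  simp only [habsF, habsK, habsFK, habsFmK] at hplaw
  norm_num at hplaw

/-- Step 2: distinct two-element subsets have disjoint `G`-sets. -/
theorem Gset_disjoint_of_ne
    {X : Type*} [TopologicalSpace X] [CompactSpace X] [T2Space X]
    [FirstCountableTopology X]
    (h3 : ∃ a b c : X, a ≠ b ∧ a ≠ c ∧ b ≠ c)
    (φ : C(X, ℂ) →ₗ[ℂ] C(X, ℂ)) (hbij : Function.Bijective φ)
    (hdp : DiamPreserving (⇑φ))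
    (x₁ y₁ x₂ y₂ : X) (h₁ : x₁ ≠ y₁) (h₂ : x₂ ≠ y₂)
    (hne : ({x₁, y₁} : Set X) ≠ {x₂, y₂}) :
    Gset (⇑φ) ({x₁, y₁} : Set X) ∩ Gset (⇑φ) ({x₂, y₂} : Set X) = ∅ := by
  -- find a point of the second pair outside the first pair
  have hout : x₂ ∉ ({x₁, y₁} : Set X) ∨ y₂ ∉ ({x₁, y₁} : Set X) := by
    by_contra h
    push_neg at h
    apply hne
    apply Set.eq_of_subset_of_subset
    · -- {x₁,y₁} ⊆ {x₂,y₂}: since x₂,y₂ ∈ {x₁,y₁} and distinct, they exhaust it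
      rcases h.1 with h1 | h1 <;> rcases h.2 with h2 | h2
      · exact absurd (h1.trans h2.symm) h₂
      · rw [← h1, ← h2]
      · rw [← h1, ← h2, Set.pair_comm]
      · exact absurd (h1.trans h2.symm) h₂
    · rintro u (rfl | rfl)
      · exact h.1
      · exact h.2
  rcases hout with hout | hout
  · -- x₂ outside {x₁, y₁}
    simp only [Set.mem_insert_iff, Set.mem_singleton_iff, not_or] at hout
    by_cases hz : x₁ = y₂
    · -- swap x₁ and y₁
      subst hz
      rw [Set.pair_comm x₁ y₁]
      have hy₁y₂ : y₁ ≠ x₁ := h₁.symm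
      exact Gset_disjoint_key φ hdp y₁ x₁ x₂ x₁ hy₁y₂ h₂ hout.2 hout.1 hy₁y₂
    · exact Gset_disjoint_key φ hdp x₁ y₁ x₂ y₂ h₁ h₂ hout.1 hout.2 hz
  · -- y₂ outside {x₁, y₁}: swap x₂ and y₂
    simp only [Set.mem_insert_iff, Set.mem_singleton_iff, not_or] at hout
    rw [Set.pair_comm x₂ y₂]
    by_cases hz : x₁ = x₂
    · subst hz
      rw [Set.pair_comm x₁ y₁]
      exact Gset_disjoint_key φ hdp y₁ x₁ y₂ x₁ (fun h => h₁ h.symm) (fun h => h₂ h.symm)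
        hout.2 hout.1 (fun h => h₁ h.symm)
    · exact Gset_disjoint_key φ hdp x₁ y₁ y₂ x₂ h₁ (fun h => h₂ h.symm) hout.1 hout.2 hz
end

section
/- Let X be a first countable compact Hausdorff topological space with at least three points and let φ : C(X,ℂ) → C(X,ℂ) be a diameter preserving linear bijection. Let {x,y} be a two-element subset of X and let f ∈ C(X,ℂ). If S(φ(f)) = G({x,y}), then S(f) = {{x,y}}. -/
set_option maxHeartbeats 1000000


open Metric Set

noncomputable section

namespace DiamAux

variable {X : Type*} [TopologicalSpace X]

def cplx (g : C(X, ℝ)) : C(X, ℂ) :=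
  ⟨fun z => (g z : ℂ), Complex.continuous_ofReal.comp g.continuous⟩

@[simp] lemma cplx_apply (g : C(X, ℝ)) (z : X) : cplx g z = (g z : ℂ) := rfl

lemma abs_sub_le_diam [CompactSpace X] (h : C(X, ℂ)) (a b : X) :
    ‖h a - h b‖ ≤ Metric.diam (Set.range ⇑h) := by
  rw [← Complex.dist_eq]
  exact Metric.dist_le_diam_of_mem (isCompact_range h.continuous).isBounded
    (mem_range_self a) (mem_range_self b)

lemma diam_le_of_forall {h : C(X, ℂ)} {C : ℝ} (hC : 0 ≤ C)
    (hb : ∀ a b, ‖h a - h b‖ ≤ C) :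
    Metric.diam (Set.range ⇑h) ≤ C := by
  apply Metric.diam_le_of_forall_dist_le hC
  rintro _ ⟨a, rfl⟩ _ ⟨b, rfl⟩
  rw [Complex.dist_eq]; exact hb a b

lemma exists_attain [CompactSpace X] [Nonempty X] (h : C(X, ℂ)) :
    ∃ a b : X, ‖h a - h b‖ = Metric.diam (Set.range ⇑h) := by
  have hc : Continuous fun q : X × X => ‖h q.1 - h q.2‖ :=
    continuous_norm.comp
      ((h.continuous.comp continuous_fst).sub (h.continuous.comp continuous_snd))
  obtain ⟨⟨a, b⟩, -, hmax⟩ := (isCompact_univ (X := X × X)).exists_isMaxOn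
    univ_nonempty hc.continuousOn
  rw [isMaxOn_iff] at hmax
  refine ⟨a, b, le_antisymm (abs_sub_le_diam h a b) ?_⟩
  exact diam_le_of_forall (norm_nonneg _) fun s t => hmax (s, t) (mem_univ _)

lemma abs_eq_diam_of_mem {h : C(X, ℂ)} {a b : X} (hm : ({a, b} : Set X) ∈ diamSet h) :
    ‖h a - h b‖ = Metric.diam (Set.range ⇑h) := by
  obtain ⟨c, d, hcd, hset, habs⟩ := hm
  rcases Set.pair_eq_pair_iff.mp hset.symm with ⟨h1, h2⟩ | ⟨h1, h2⟩
  · subst h1; subst h2; exact habs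
  · subst h1; subst h2; rw [← habs]; exact norm_sub_rev _ _

lemma align {A B : ℂ} (h : ‖A + B‖ = ‖A‖ + ‖B‖) :
    (‖A‖ : ℂ) * B = (‖B‖ : ℂ) * A := by
  by_cases hA : A = 0
  · simp [hA]
  have hsr : SameRay ℝ A B := by
    rw [sameRay_iff_norm_add]
    simpa using h
  obtain ⟨r, hr, hrA⟩ := hsr.exists_nonneg_left hA
  have hB : B = (r : ℂ) * A := by
    rw [← hrA, Complex.real_smul]
  have habsB : ‖B‖ = r * ‖A‖ := by
    rw [hB, norm_mul, Complex.norm_real, Real.norm_eq_abs, abs_of_nonneg hr]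
  rw [habsB, hB]
  push_cast
  ring

lemma exists_pairPeak [CompactSpace X] [T2Space X] [FirstCountableTopology X]
    {x y : X} (hxy : x ≠ y) :
    ∃ p : C(X, ℝ), (∀ z, p z ∈ Set.Icc (-1 : ℝ) 1) ∧ p x = 1 ∧ p y = -1 ∧
      (∀ z, p z = 1 → z = x) ∧ (∀ z, p z = -1 → z = y) := by
  obtain ⟨u, hu1, hu0, -, huI⟩ := exists_continuous_one_zero_of_isCompact_of_isGδ
    isCompact_singleton (IsGδ.singleton x) isClosed_singleton
    (Set.disjoint_singleton.mpr hxy)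
  obtain ⟨v, hv1, hv0, -, hvI⟩ := exists_continuous_one_zero_of_isCompact_of_isGδ
    isCompact_singleton (IsGδ.singleton y) isClosed_singleton
    (Set.disjoint_singleton.mpr hxy.symm)
  have hux : u x = 1 := by
    have : x ∈ u ⁻¹' {1} := hu1 ▸ rfl
    simpa using this
  have hvy : v y = 1 := by
    have : y ∈ v ⁻¹' {1} := hv1 ▸ rfl
    simpa using this
  have huy : u y = 0 := hu0 rfl
  have hvx : v x = 0 := hv0 rfl
  refine ⟨u - v, fun z => ?_, ?_, ?_, fun z hz => ?_, fun z hz => ?_⟩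
  · have h1 := huI z; have h2 := hvI z
    simp only [ContinuousMap.sub_apply, Set.mem_Icc] at *
    constructor <;> linarith [h1.1, h1.2, h2.1, h2.2]
  · simp [ContinuousMap.sub_apply, hux, hvx]
  · simp [ContinuousMap.sub_apply, huy, hvy]
  · have h1 := (huI z).2; have h2 := (hvI z).1
    simp only [ContinuousMap.sub_apply] at hz
    have : u z = 1 := by linarith
    have : z ∈ u ⁻¹' {1} := by simpa using this
    rw [← hu1] at this; simpa using this
  · have h1 := (huI z).1; have h2 := (hvI z).2
    simp only [ContinuousMap.sub_apply] at hz
    have : v z = 1 := by linarith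
    have : z ∈ v ⁻¹' {1} := by simpa using this
    rw [← hv1] at this; simpa using this



lemma star_lemma [CompactSpace X] (φ : C(X, ℂ) →ₗ[ℂ] C(X, ℂ)) (hdp : DiamPreserving ⇑φ)
    {x y : X} (hxy : x ≠ y) (pC : C(X, ℂ))
    (hp2 : pC x - pC y = 2) (hpb : ∀ s t, ‖pC s - pC t‖ ≤ 2)
    {a b : X} (hab : a ≠ b) (hG : ({a, b} : Set X) ∈ Gset ⇑φ ({x, y} : Set X)) :
    ‖φ pC a - φ pC b‖ = 2 ∧
      ∀ g : C(X, ℂ), ({x, y} : Set X) ∈ diamSet g →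
        φ g a - φ g b = ((g x - g y) / 2) * (φ pC a - φ pC b) := by
  have hdiamp : Metric.diam (Set.range ⇑pC) = 2 := by
    refine le_antisymm (diam_le_of_forall (by norm_num) hpb) ?_
    have := abs_sub_le_diam pC x y
    rw [hp2] at this
    simpa using this
  have hxymem : ({x, y} : Set X) ∈ diamSet pC :=
    ⟨x, y, hxy, rfl, by rw [hp2, hdiamp]; simp⟩
  have hA2 : ‖φ pC a - φ pC b‖ = 2 := by
    have := abs_eq_diam_of_mem (hG pC hxymem)
    rw [this, hdp, hdiamp]
  refine ⟨hA2, fun g hg => ?_⟩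
  set μ : ℂ := g x - g y with hμdef
  have hμdiam : ‖μ‖ = Metric.diam (Set.range ⇑g) := abs_eq_diam_of_mem hg
  by_cases hμ0 : μ = 0
  · have h1 : Metric.diam (Set.range ⇑(φ g)) = 0 := by
      rw [hdp, ← hμdiam, hμ0, norm_zero]
    have h2 : ‖φ g a - φ g b‖ ≤ 0 := h1 ▸ abs_sub_le_diam (φ g) a b
    have h3 : φ g a - φ g b = 0 := by
      have := norm_nonneg (φ g a - φ g b)
      have h4 : ‖φ g a - φ g b‖ = 0 := le_antisymm h2 this
      exact norm_eq_zero.mp h4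
    rw [h3, hμ0]
    ring
  -- non-degenerate case
  set lam : ℂ := (‖μ‖ : ℂ) / μ with hlamdef
  have habsμpos : (0 : ℝ) < ‖μ‖ := norm_pos_iff.mpr hμ0
  have habsμne : (‖μ‖ : ℂ) ≠ 0 := by
    exact_mod_cast habsμpos.ne'
  have hlam1 : ‖lam‖ = 1 := by
    rw [hlamdef, norm_div, Complex.norm_real, Real.norm_eq_abs, abs_of_nonneg habsμpos.le, div_self habsμpos.ne']
  have hlamμ : lam * μ = (‖μ‖ : ℂ) := by
    rw [hlamdef, div_mul_cancel₀ _ hμ0]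
  set h₁ : C(X, ℂ) := pC + lam • g with hh₁def
  have hh₁xy : h₁ x - h₁ y = 2 + (‖μ‖ : ℂ) := by
    have e : h₁ x - h₁ y = (pC x - pC y) + lam * μ := by
      simp only [hh₁def, ContinuousMap.add_apply, ContinuousMap.smul_apply, smul_eq_mul, hμdef]
      ring
    rw [e, hp2, hlamμ]
  have hh₁absxy : ‖h₁ x - h₁ y‖ = 2 + ‖μ‖ := by
    rw [hh₁xy]
    have : (2 : ℂ) + (‖μ‖ : ℂ) = ((2 + ‖μ‖ : ℝ) : ℂ) := by push_cast; ring
    rw [this, Complex.norm_real, Real.norm_eq_abs, abs_of_nonneg (by linarith)]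
  have hd₁le : Metric.diam (Set.range ⇑h₁) ≤ 2 + ‖μ‖ := by
    refine diam_le_of_forall (by linarith) fun s t => ?_
    have e1 : h₁ s - h₁ t = (pC s - pC t) + lam * (g s - g t) := by
      simp only [hh₁def, ContinuousMap.add_apply, ContinuousMap.smul_apply, smul_eq_mul]
      ring
    calc ‖h₁ s - h₁ t‖
        ≤ ‖pC s - pC t‖ + ‖lam * (g s - g t)‖ := by
          rw [e1]; exact norm_add_le _ _
      _ ≤ 2 + ‖μ‖ := by
          rw [norm_mul, hlam1, one_mul]
          have := abs_sub_le_diam g s t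
          rw [← hμdiam] at this
          linarith [hpb s t]
  have hd₁ : Metric.diam (Set.range ⇑h₁) = 2 + ‖μ‖ := by
    refine le_antisymm hd₁le ?_
    rw [← hh₁absxy]
    exact abs_sub_le_diam h₁ x y
  have hmem₁ : ({x, y} : Set X) ∈ diamSet h₁ := ⟨x, y, hxy, rfl, by rw [hh₁absxy, hd₁]⟩
  have habs₁ : ‖φ h₁ a - φ h₁ b‖ = 2 + ‖μ‖ := by
    have := abs_eq_diam_of_mem (hG h₁ hmem₁)
    rw [this, hdp, hd₁]
  have hφh₁ : φ h₁ = φ pC + lam • φ g := by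
    rw [hh₁def, map_add, map_smul]
  set A : ℂ := φ pC a - φ pC b with hAdef
  set B : ℂ := lam * (φ g a - φ g b) with hBdef
  have hAB : φ h₁ a - φ h₁ b = A + B := by
    simp only [hφh₁, ContinuousMap.add_apply, ContinuousMap.smul_apply, smul_eq_mul,
      hAdef, hBdef]
    ring
  have hBle : ‖B‖ ≤ ‖μ‖ := by
    rw [hBdef, norm_mul, hlam1, one_mul]
    have := abs_sub_le_diam (φ g) a b
    rw [hdp, ← hμdiam] at this
    exact this
  have htri : ‖A + B‖ ≤ ‖A‖ + ‖B‖ := norm_add_le _ _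
  have hsum : ‖A + B‖ = 2 + ‖μ‖ := by rw [← hAB, habs₁]
  have hBeq : ‖B‖ = ‖μ‖ := by
    rw [hsum, hA2] at htri; linarith
  have heq : ‖A + B‖ = ‖A‖ + ‖B‖ := by
    rw [hsum, hA2, hBeq]
  have halign := align heq
  rw [hA2, hBeq] at halign
  -- halign : (2:ℝ) * B = abs μ * A   (with coercions)
  have h2B : (2 : ℂ) * B = (‖μ‖ : ℂ) * A := by exact_mod_cast halign
  have hne : (2 * (‖μ‖ : ℂ)) ≠ 0 := by
    simp [habsμne]
  have key : (2 * (‖μ‖ : ℂ)) * (φ g a - φ g b)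
      = (2 * (‖μ‖ : ℂ)) * (μ / 2 * A) := by
    calc (2 * (‖μ‖ : ℂ)) * (φ g a - φ g b)
        = (2 * B) * μ := by rw [hBdef, ← hlamμ]; ring
      _ = ((‖μ‖ : ℂ) * A) * μ := by rw [h2B]
      _ = (2 * (‖μ‖ : ℂ)) * (μ / 2 * A) := by ring
  have hD := mul_left_cancel₀ hne key
  rw [hD]

end DiamAux

/-- Step 4: if `S(φ(f)) = G({x,y})`, then `S(f) = {{x,y}}`. -/
theorem diamSet_eq_of_image_eq_Gset
    {X : Type*} [TopologicalSpace X] [CompactSpace X] [T2Space X]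
    [FirstCountableTopology X]
    (h3 : ∃ a b c : X, a ≠ b ∧ a ≠ c ∧ b ≠ c)
    (φ : C(X, ℂ) →ₗ[ℂ] C(X, ℂ)) (hbij : Function.Bijective φ)
    (hdp : DiamPreserving (⇑φ))
    (x y : X) (hxy : x ≠ y) (f : C(X, ℂ))
    (hf : diamSet (φ f) = Gset (⇑φ) ({x, y} : Set X)) :
    diamSet f = {({x, y} : Set X)} := by
  classical
  haveI : Nonempty X := ⟨x⟩
  obtain ⟨pR, hpRI, hpRx, hpRy, hpR1, hpR2⟩ := DiamAux.exists_pairPeak hxy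
  set pC : C(X, ℂ) := DiamAux.cplx pR with hpCdef
  have hpCsub : ∀ s t : X, pC s - pC t = ((pR s - pR t : ℝ) : ℂ) := by
    intro s t
    simp [hpCdef, DiamAux.cplx_apply]
  have hp2 : pC x - pC y = 2 := by
    rw [hpCsub, hpRx, hpRy]; norm_num
  have hpb : ∀ s t, ‖pC s - pC t‖ ≤ 2 := by
    intro s t
    rw [hpCsub, Complex.norm_real, Real.norm_eq_abs]
    have h1 := hpRI s; have h2 := hpRI t
    rw [Set.mem_Icc] at h1 h2
    rw [abs_le]; constructor <;> linarith [h1.1, h1.2, h2.1, h2.2]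
  have hpair : ∀ s t : X, ‖pC s - pC t‖ = 2 →
      (s = x ∧ t = y) ∨ (s = y ∧ t = x) := by
    intro s t h
    rw [hpCsub, Complex.norm_real, Real.norm_eq_abs] at h
    have h1 := hpRI s; have h2 := hpRI t
    rw [Set.mem_Icc] at h1 h2
    rcases (abs_eq (by norm_num : (0:ℝ) ≤ 2)).mp h with h' | h'
    · exact Or.inl ⟨hpR1 s (by linarith [h1.2, h2.1]), hpR2 t (by linarith [h1.2, h2.1])⟩
    · exact Or.inr ⟨hpR2 s (by linarith [h1.1, h2.2]), hpR1 t (by linarith [h1.1, h2.2])⟩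
  set D := Metric.diam (Set.range ⇑f) with hDdef
  have hDnn : 0 ≤ D := Metric.diam_nonneg
  -- Part 0 : D > 0
  have hDpos : 0 < D := by
    rcases hDnn.lt_or_eq with h | h
    · exact h
    exfalso
    have hφf0 : Metric.diam (Set.range ⇑(φ f)) = 0 := by rw [hdp f, ← hDdef, ← h]
    have hφf : ∀ a b : X, ‖φ f a - φ f b‖ = Metric.diam (Set.range ⇑(φ f)) := by
      intro a b
      have h2 := DiamAux.abs_sub_le_diam (φ f) a b
      rw [hφf0] at h2 ⊢
      exact le_antisymm h2 (norm_nonneg _)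
    have hGall : ∀ a b : X, a ≠ b → ({a, b} : Set X) ∈ Gset ⇑φ ({x, y} : Set X) := by
      intro a b hab
      rw [← hf]
      exact ⟨a, b, hab, rfl, hφf a b⟩
    obtain ⟨z, hzx, hzy⟩ : ∃ z : X, z ≠ x ∧ z ≠ y := by
      obtain ⟨a, b, c, hab, hac, hbc⟩ := h3
      by_cases h1 : a ≠ x ∧ a ≠ y
      · exact ⟨a, h1.1, h1.2⟩
      by_cases h2 : b ≠ x ∧ b ≠ y
      · exact ⟨b, h2.1, h2.2⟩
      push_neg at h1 h2
      have ha : a = x ∨ a = y := by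
        by_cases h : a = x
        · exact Or.inl h
        · exact Or.inr (h1 h)
      have hb : b = x ∨ b = y := by
        by_cases h : b = x
        · exact Or.inl h
        · exact Or.inr (h2 h)
      refine ⟨c, ?_, ?_⟩
      · intro hcx
        rcases ha with ha | ha
        · exact hac (ha.trans hcx.symm)
        · rcases hb with hb | hb
          · exact hbc (hb.trans hcx.symm)
          · exact hab (ha.trans hb.symm)
      · intro hcy
        rcases ha with ha | ha
        · rcases hb with hb | hb
          · exact hab (ha.trans hb.symm)
          · exact hbc (hb.trans hcy.symm)
        · exact hac (ha.trans hcy.symm)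
    obtain ⟨w₀, hw₀0, hw₀1, hw₀I⟩ := exists_continuous_zero_one_of_isClosed
      (IsClosed.union isClosed_singleton isClosed_singleton : IsClosed ({x} ∪ {y} : Set X))
      (isClosed_singleton : IsClosed ({z} : Set X))
      (by rw [Set.disjoint_union_left]
          exact ⟨Set.disjoint_singleton.mpr (fun hh => hzx hh.symm),
                 Set.disjoint_singleton.mpr (fun hh => hzy hh.symm)⟩)
    set wR : C(X, ℝ) := (1/2 : ℝ) • (w₀ * (1 - pR * pR)) with hwRdef
    have hwval : ∀ s, wR s = w₀ s * (1 - pR s * pR s) / 2 := by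
      intro s
      simp [hwRdef, ContinuousMap.smul_apply, ContinuousMap.mul_apply, ContinuousMap.sub_apply,
        ContinuousMap.one_apply]
      ring
    have hw₀x : w₀ x = 0 := hw₀0 (Or.inl rfl)
    have hw₀y : w₀ y = 0 := hw₀0 (Or.inr rfl)
    have hw₀z : w₀ z = 1 := hw₀1 rfl
    have hwx : wR x = 0 := by simp [hwval, hw₀x]
    have hwy : wR y = 0 := by simp [hwval, hw₀y]
    have hwz : 0 < wR z := by
      rw [hwval, hw₀z]
      have h1 := hpRI z
      rw [Set.mem_Icc] at h1
      have h2 : pR z ≠ 1 := fun hc => hzx (hpR1 z hc)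
      have h3 : pR z ≠ -1 := fun hc => hzy (hpR2 z hc)
      have h4 : pR z < 1 := lt_of_le_of_ne h1.2 h2
      have h5 : -1 < pR z := lt_of_le_of_ne h1.1 (Ne.symm h3)
      nlinarith [mul_pos (by linarith : (0:ℝ) < 1 - pR z) (by linarith : (0:ℝ) < 1 + pR z)]
    set qC : C(X, ℂ) := pC + DiamAux.cplx wR with hqCdef
    have hqsub : ∀ s t : X, qC s - qC t = (((pR s + wR s) - (pR t + wR t) : ℝ) : ℂ) := by
      intro s t
      simp only [hqCdef, ContinuousMap.add_apply, hpCdef, DiamAux.cplx_apply]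
      push_cast
      ring
    have hbnds : ∀ s : X, -1 ≤ pR s + wR s ∧ pR s + wR s ≤ 1 := by
      intro s
      have h1 := hpRI s
      rw [Set.mem_Icc] at h1
      have h2 := hw₀I s
      rw [Set.mem_Icc] at h2
      rw [hwval]
      have hnn : 0 ≤ 1 - pR s * pR s := by nlinarith [h1.1, h1.2]
      have hwnn : 0 ≤ w₀ s * (1 - pR s * pR s) := mul_nonneg h2.1 hnn
      have hle1 : w₀ s * (1 - pR s * pR s) ≤ 1 - pR s * pR s :=
        mul_le_of_le_one_left hnn h2.2
      constructor
      · linarith [h1.1]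
      · nlinarith [sq_nonneg (1 - pR s), h1.1, h1.2]
    have hq2 : qC x - qC y = 2 := by
      rw [hqsub, hpRx, hpRy, hwx, hwy]; norm_num
    have hqb : ∀ s t, ‖qC s - qC t‖ ≤ 2 := by
      intro s t
      rw [hqsub, Complex.norm_real, Real.norm_eq_abs]
      have h1 := hbnds s; have h2 := hbnds t
      rw [abs_le]; constructor <;> linarith [h1.1, h1.2, h2.1, h2.2]
    have hdq : Metric.diam (Set.range ⇑qC) = 2 := by
      refine le_antisymm (DiamAux.diam_le_of_forall (by norm_num) hqb) ?_
      have h2 := DiamAux.abs_sub_le_diam qC x y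
      rw [hq2] at h2
      simpa using h2
    have hmemq : ({x, y} : Set X) ∈ diamSet qC :=
      ⟨x, y, hxy, rfl, by rw [hq2, hdq]; simp⟩
    have hwconst : ∀ a : X, φ (DiamAux.cplx wR) a = φ (DiamAux.cplx wR) x := by
      intro a
      by_cases hax : a = x
      · rw [hax]
      obtain ⟨-, hstar⟩ := DiamAux.star_lemma φ hdp hxy pC hp2 hpb hax (hGall a x hax)
      have e1 := hstar qC hmemq
      have e2 : φ qC = φ pC + φ (DiamAux.cplx wR) := by rw [hqCdef, map_add]
      have e3 : φ qC a - φ qC x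
          = (φ pC a - φ pC x) + (φ (DiamAux.cplx wR) a - φ (DiamAux.cplx wR) x) := by
        rw [e2]; simp only [ContinuousMap.add_apply]; ring
      rw [e3, hq2] at e1
      have e4 : φ (DiamAux.cplx wR) a - φ (DiamAux.cplx wR) x = 0 := by
        linear_combination e1
      exact sub_eq_zero.mp e4
    have hdiamw : Metric.diam (Set.range ⇑(φ (DiamAux.cplx wR))) = 0 := by
      apply Metric.diam_subsingleton
      rintro _ ⟨a, rfl⟩ _ ⟨b, rfl⟩
      rw [hwconst a, hwconst b]
    have hdw : Metric.diam (Set.range ⇑(DiamAux.cplx wR)) = 0 := by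
      rw [← hdp (DiamAux.cplx wR), hdiamw]
    have hle := DiamAux.abs_sub_le_diam (DiamAux.cplx wR) z x
    rw [hdw] at hle
    have : ‖DiamAux.cplx wR z - DiamAux.cplx wR x‖ = wR z := by
      simp only [DiamAux.cplx_apply]
      rw [hwx]
      push_cast
      simp [Complex.norm_real, Real.norm_eq_abs, abs_of_nonneg hwz.le]
    rw [this] at hle
    linarith
  have hDcne : (D : ℂ) ≠ 0 := by exact_mod_cast hDpos.ne'
  -- Part A : {x, y} ∈ S(f)
  have hfD : Metric.diam (Set.range ⇑(φ f)) = D := by rw [hdp f]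
  obtain ⟨a, b, habs_ab⟩ := DiamAux.exists_attain (φ f)
  rw [hfD] at habs_ab
  have hab : a ≠ b := by
    intro hh
    rw [hh] at habs_ab
    simp at habs_ab
    linarith
  have hGab : ({a, b} : Set X) ∈ Gset ⇑φ ({x, y} : Set X) := by
    rw [← hf]
    exact ⟨a, b, hab, rfl, by rw [hfD]; exact habs_ab⟩
  obtain ⟨hA2, hstar⟩ := DiamAux.star_lemma φ hdp hxy pC hp2 hpb hab hGab
  set A : ℂ := φ pC a - φ pC b with hAdef
  have hAne : A ≠ 0 := by
    intro hh; rw [hh] at hA2; simp at hA2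
  set Cc : ℂ := φ f a - φ f b with hCcdef
  have habsCc : ‖Cc‖ = D := habs_ab
  set lam : ℂ := (2 * Cc) / ((D : ℂ) * A) with hlamdef
  have hlamabs : ‖lam‖ = 1 := by
    rw [hlamdef, norm_div, norm_mul, norm_mul, Complex.norm_two, habsCc, Complex.norm_real, Real.norm_eq_abs,
      abs_of_nonneg hDnn, hA2]
    field_simp
  have hlamA : lam * A = 2 * Cc / (D : ℂ) := by
    rw [hlamdef]; field_simp
  set h₂ : C(X, ℂ) := f + lam • pC with hh₂def
  have hφh₂ab : φ h₂ a - φ h₂ b = Cc * (1 + 2 / (D : ℂ)) := by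
    have e1 : φ h₂ = φ f + lam • φ pC := by rw [hh₂def, map_add, map_smul]
    have e2 : φ h₂ a - φ h₂ b = Cc + lam * A := by
      rw [e1]
      simp only [ContinuousMap.add_apply, ContinuousMap.smul_apply, smul_eq_mul, hCcdef, hAdef]
      ring
    rw [e2, hlamA]
    field_simp
  have habsφh₂ : ‖φ h₂ a - φ h₂ b‖ = D + 2 := by
    rw [hφh₂ab, norm_mul, habsCc]
    have e3 : (1 + 2 / (D : ℂ)) = (((1 + 2 / D : ℝ)) : ℂ) := by push_cast; ring
    rw [e3, Complex.norm_real, Real.norm_eq_abs, abs_of_nonneg (by positivity)]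
    field_simp
  have hd₂ge : D + 2 ≤ Metric.diam (Set.range ⇑h₂) := by
    rw [← hdp h₂, ← habsφh₂]
    exact DiamAux.abs_sub_le_diam (φ h₂) a b
  obtain ⟨s, t, hst⟩ := DiamAux.exists_attain h₂
  have hsplit : h₂ s - h₂ t = (f s - f t) + lam * (pC s - pC t) := by
    simp only [hh₂def, ContinuousMap.add_apply, ContinuousMap.smul_apply, smul_eq_mul]
    ring
  have hb1 : ‖f s - f t‖ ≤ D := by
    rw [hDdef]; exact DiamAux.abs_sub_le_diam f s t
  have hb2' : ‖lam * (pC s - pC t)‖ = ‖pC s - pC t‖ := by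
    rw [norm_mul, hlamabs, one_mul]
  have hbig : D + 2 ≤ ‖h₂ s - h₂ t‖ := by rw [hst]; exact hd₂ge
  have htri : ‖h₂ s - h₂ t‖
      ≤ ‖f s - f t‖ + ‖lam * (pC s - pC t)‖ := by
    rw [hsplit]; exact norm_add_le _ _
  have hpst : ‖pC s - pC t‖ = 2 := by
    have := hpb s t
    rw [hb2'] at htri
    linarith
  have hfst : ‖f s - f t‖ = D := by
    rw [hb2', hpst] at htri
    linarith
  have habsF : ‖f x - f y‖ = D := by
    rcases hpair s t hpst with ⟨hs, ht⟩ | ⟨hs, ht⟩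
    · rw [hs, ht] at hfst; exact hfst
    · rw [norm_sub_rev]
      rw [hs, ht] at hfst
      exact hfst
  set F : ℂ := f x - f y with hFdef
  have hmemf : ({x, y} : Set X) ∈ diamSet f := ⟨x, y, hxy, rfl, by rw [← hDdef]; exact habsF⟩
  -- Part B
  have partB : ∀ c d : X, c ≠ d →
      ‖f c - f d‖ = D → ({c, d} : Set X) = ({x, y} : Set X) := by
    intro c d hcd habscd
    by_contra hne
    obtain ⟨qR, hqRI, hqRc, hqRd, hqR1, hqR2⟩ := DiamAux.exists_pairPeak hcd
    set qC : C(X, ℂ) := DiamAux.cplx qR with hqCdef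
    have hqsub : ∀ s t : X, qC s - qC t = ((qR s - qR t : ℝ) : ℂ) := by
      intro s t
      simp [hqCdef, DiamAux.cplx_apply]
    have hq2 : qC c - qC d = 2 := by rw [hqsub, hqRc, hqRd]; norm_num
    have hqb : ∀ s t, ‖qC s - qC t‖ ≤ 2 := by
      intro s t
      rw [hqsub, Complex.norm_real, Real.norm_eq_abs]
      have h1 := hqRI s; have h2 := hqRI t
      rw [Set.mem_Icc] at h1 h2
      rw [abs_le]; constructor <;> linarith [h1.1, h1.2, h2.1, h2.2]
    have hqpair : ∀ s t : X, ‖qC s - qC t‖ = 2 →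
        (s = c ∧ t = d) ∨ (s = d ∧ t = c) := by
      intro s t h
      rw [hqsub, Complex.norm_real, Real.norm_eq_abs] at h
      have h1 := hqRI s; have h2 := hqRI t
      rw [Set.mem_Icc] at h1 h2
      rcases (abs_eq (by norm_num : (0:ℝ) ≤ 2)).mp h with h' | h'
      · exact Or.inl ⟨hqR1 s (by linarith [h1.2, h2.1]), hqR2 t (by linarith [h1.2, h2.1])⟩
      · exact Or.inr ⟨hqR2 s (by linarith [h1.1, h2.2]), hqR1 t (by linarith [h1.1, h2.2])⟩
    set ν : ℂ := (f c - f d) / (D : ℂ) with hνdef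
    have hνabs : ‖ν‖ = 1 := by
      rw [hνdef, norm_div, habscd, Complex.norm_real, Real.norm_eq_abs, abs_of_nonneg hDnn]
      field_simp
    have hfcd : f c - f d = (D : ℂ) * ν := by
      rw [hνdef]; field_simp
    set h₃ : C(X, ℂ) := f + ν • qC with hh₃def
    have hh₃cd : h₃ c - h₃ d = ((D : ℂ) + 2) * ν := by
      have e : h₃ c - h₃ d = (f c - f d) + ν * (qC c - qC d) := by
        simp only [hh₃def, ContinuousMap.add_apply, ContinuousMap.smul_apply, smul_eq_mul]
        ring
      rw [e, hfcd, hq2]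
      ring
    have habs₃cd : ‖h₃ c - h₃ d‖ = D + 2 := by
      rw [hh₃cd, norm_mul, hνabs, mul_one]
      have e : ((D : ℂ) + 2) = (((D + 2 : ℝ)) : ℂ) := by push_cast; ring
      rw [e, Complex.norm_real, Real.norm_eq_abs, abs_of_nonneg (by linarith)]
    have hd₃le : Metric.diam (Set.range ⇑h₃) ≤ D + 2 := by
      refine DiamAux.diam_le_of_forall (by linarith) fun s t => ?_
      have e : h₃ s - h₃ t = (f s - f t) + ν * (qC s - qC t) := by
        simp only [hh₃def, ContinuousMap.add_apply, ContinuousMap.smul_apply, smul_eq_mul]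
        ring
      calc ‖h₃ s - h₃ t‖
          ≤ ‖f s - f t‖ + ‖ν * (qC s - qC t)‖ := by
            rw [e]; exact norm_add_le _ _
        _ ≤ D + 2 := by
            rw [norm_mul, hνabs, one_mul]
            have h1 : ‖f s - f t‖ ≤ D := by
              rw [hDdef]; exact DiamAux.abs_sub_le_diam f s t
            linarith [hqb s t]
    have hd₃ : Metric.diam (Set.range ⇑h₃) = D + 2 := by
      refine le_antisymm hd₃le ?_
      rw [← habs₃cd]
      exact DiamAux.abs_sub_le_diam h₃ c d
    obtain ⟨a', b', hab₃⟩ := DiamAux.exists_attain (φ h₃)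
    have hab₃' : ‖φ h₃ a' - φ h₃ b'‖ = D + 2 := by
      rw [hab₃, hdp, hd₃]
    have hab' : a' ≠ b' := by
      intro hh
      rw [hh] at hab₃'
      simp at hab₃'
      linarith
    have hsplit₃ : φ h₃ a' - φ h₃ b' = (φ f a' - φ f b') + ν * (φ qC a' - φ qC b') := by
      have e1 : φ h₃ = φ f + ν • φ qC := by rw [hh₃def, map_add, map_smul]
      rw [e1]
      simp only [ContinuousMap.add_apply, ContinuousMap.smul_apply, smul_eq_mul]
      ring
    have hbf : ‖φ f a' - φ f b'‖ ≤ D := by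
      have := DiamAux.abs_sub_le_diam (φ f) a' b'
      rwa [hfD] at this
    have hbq' : ‖ν * (φ qC a' - φ qC b')‖ = ‖φ qC a' - φ qC b'‖ := by
      rw [norm_mul, hνabs, one_mul]
    have hbq : ‖φ qC a' - φ qC b'‖ ≤ 2 := by
      have h1 := DiamAux.abs_sub_le_diam (φ qC) a' b'
      have h2 : Metric.diam (Set.range ⇑qC) ≤ 2 := DiamAux.diam_le_of_forall (by norm_num) hqb
      rw [hdp] at h1
      linarith
    have htri₃ : ‖φ h₃ a' - φ h₃ b'‖
        ≤ ‖φ f a' - φ f b'‖ + ‖ν * (φ qC a' - φ qC b')‖ := by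
      rw [hsplit₃]; exact norm_add_le _ _
    have hPf : ‖φ f a' - φ f b'‖ = D := by
      rw [hbq'] at htri₃
      linarith [hab₃'.ge, hab₃'.le, htri₃, hbq]
    have hQ2 : ‖φ qC a' - φ qC b'‖ = 2 := by
      rw [hbq'] at htri₃
      linarith [htri₃, hbf]
    have hGab' : ({a', b'} : Set X) ∈ Gset ⇑φ ({x, y} : Set X) := by
      rw [← hf]
      exact ⟨a', b', hab', rfl, by rw [hfD]; exact hPf⟩
    obtain ⟨hA2', hstar'⟩ := DiamAux.star_lemma φ hdp hxy pC hp2 hpb hab' hGab'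
    set A' : ℂ := φ pC a' - φ pC b' with hA'def
    have hPeq : φ f a' - φ f b' = (F / 2) * A' := by
      have := hstar' f hmemf
      rw [← hFdef] at this
      exact this
    have heq₃ : ‖(φ f a' - φ f b') + ν * (φ qC a' - φ qC b')‖
        = ‖φ f a' - φ f b'‖ + ‖ν * (φ qC a' - φ qC b')‖ := by
      rw [← hsplit₃, hab₃', hPf, hbq', hQ2]
    have halign := DiamAux.align heq₃
    rw [hPf, hbq', hQ2] at halign
    -- halign : (D:ℂ) * (ν * (φ qC a' - φ qC b')) = 2 * (φ f a' - φ f b')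
    have hQeq : ν * (φ qC a' - φ qC b') = (F / (D : ℂ)) * A' := by
      have key : (D : ℂ) * (ν * (φ qC a' - φ qC b')) = (D : ℂ) * ((F / (D : ℂ)) * A') := by
        calc (D : ℂ) * (ν * (φ qC a' - φ qC b'))
            = ((2 : ℝ) : ℂ) * (φ f a' - φ f b') := halign
          _ = 2 * ((F / 2) * A') := by rw [hPeq]; push_cast; ring
          _ = (D : ℂ) * ((F / (D : ℂ)) * A') := by field_simp
      exact mul_left_cancel₀ hDcne key
    set h₄ : C(X, ℂ) := f + ν • qC + (F / (D : ℂ)) • pC with hh₄def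
    have hsplit₄ : φ h₄ a' - φ h₄ b'
        = (φ f a' - φ f b') + ν * (φ qC a' - φ qC b') + (F / (D : ℂ)) * A' := by
      have e1 : φ h₄ = φ f + ν • φ qC + (F / (D : ℂ)) • φ pC := by
        rw [hh₄def, map_add, map_add, map_smul, map_smul]
      rw [e1]
      simp only [ContinuousMap.add_apply, ContinuousMap.smul_apply, smul_eq_mul, hA'def]
      ring
    have hval₄ : φ h₄ a' - φ h₄ b' = F * A' * ((1 : ℂ)/2 + 2 / (D : ℂ)) := by
      rw [hsplit₄, hPeq, hQeq]
      field_simp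
      ring
    have habsF' : ‖F‖ = D := habsF
    have habs₄ : ‖φ h₄ a' - φ h₄ b'‖ = D + 4 := by
      rw [hval₄, norm_mul, norm_mul, habsF', hA2']
      have e : ((1 : ℂ)/2 + 2 / (D : ℂ)) = (((1/2 + 2/D : ℝ)) : ℂ) := by push_cast; ring
      rw [e, Complex.norm_real, Real.norm_eq_abs, abs_of_nonneg (by positivity)]
      field_simp
      ring
    have hd₄ge : D + 4 ≤ Metric.diam (Set.range ⇑h₄) := by
      rw [← hdp h₄, ← habs₄]
      exact DiamAux.abs_sub_le_diam (φ h₄) a' b'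
    obtain ⟨s, t, hst₄⟩ := DiamAux.exists_attain h₄
    have hsplit' : h₄ s - h₄ t
        = (f s - f t) + ν * (qC s - qC t) + (F / (D : ℂ)) * (pC s - pC t) := by
      simp only [hh₄def, ContinuousMap.add_apply, ContinuousMap.smul_apply, smul_eq_mul]
      ring
    have hc1 : ‖f s - f t‖ ≤ D := by
      rw [hDdef]; exact DiamAux.abs_sub_le_diam f s t
    have hc2 : ‖ν * (qC s - qC t)‖ = ‖qC s - qC t‖ := by
      rw [norm_mul, hνabs, one_mul]
    have hc3 : ‖(F / (D : ℂ)) * (pC s - pC t)‖ = ‖pC s - pC t‖ := by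
      rw [norm_mul, norm_div, habsF', Complex.norm_real, Real.norm_eq_abs, abs_of_nonneg hDnn]
      rw [div_self hDpos.ne', one_mul]
    have hbig₄ : D + 4 ≤ ‖h₄ s - h₄ t‖ := by rw [hst₄]; exact hd₄ge
    have htri₄ : ‖h₄ s - h₄ t‖
        ≤ ‖f s - f t‖ + ‖ν * (qC s - qC t)‖
          + ‖(F / (D : ℂ)) * (pC s - pC t)‖ := by
      rw [hsplit']
      exact le_trans (norm_add_le _ _) (by gcongr; exact norm_add_le _ _)
    have hqst : ‖qC s - qC t‖ = 2 := by
      rw [hc2, hc3] at htri₄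
      linarith [hqb s t, hpb s t]
    have hpst' : ‖pC s - pC t‖ = 2 := by
      rw [hc2, hc3] at htri₄
      linarith [hqb s t, hpb s t]
    rcases hqpair s t hqst with ⟨hs1, ht1⟩ | ⟨hs1, ht1⟩ <;>
      rcases hpair s t hpst' with ⟨hs2, ht2⟩ | ⟨hs2, ht2⟩
    · exact hne (by rw [← hs1, ← ht1, hs2, ht2])
    · exact hne (by rw [← hs1, ← ht1, hs2, ht2, Set.pair_comm])
    · exact hne (by rw [← hs1, ← ht1, hs2, ht2, Set.pair_comm])
    · exact hne (by rw [← hs1, ← ht1, hs2, ht2])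
  -- conclusion
  ext S
  simp only [Set.mem_singleton_iff]
  constructor
  · rintro ⟨c, d, hcd, rfl, habs⟩
    exact partB c d hcd (by rw [hDdef]; exact habs)
  · rintro rfl
    exact ⟨x, y, hxy, rfl, by rw [← hDdef]; exact habsF⟩
end
end

section
/- Let X be a first countable compact Hausdorff topological space with at least three points, let φ : C(X,ℂ) → C(X,ℂ) be a diameter preserving linear bijection, and let G' be the bijection of the collection of two-element subsets of X determined by G({x,y}) = {G'({x,y})}. If {x₁,y₁} and {x₂,y₂} are two-element subsets of X with {x₁,y₁} ∩ {x₂,y₂} ≠ ∅, then G'({x₁,y₁}) ∩ G'({x₂,y₂}) ≠ ∅; moreover, if {x₁,y₁} and {x₂,y₂} have exactly one element in common, then G'({x₁,y₁}) and G'({x₂,y₂}) have exactly one element in common. -/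
set_option linter.unusedSectionVars false

open Set

section Helpers

lemma sq_abs_eq {u : ℂ} {r : ℝ} (h : ‖u‖ = r) : Complex.normSq u = r^2 := by
  rw [← Complex.sq_norm, h]

-- strict convexity helper
lemma unit_add_eq_two {u v : ℂ} (hu : ‖u‖ ≤ 1) (hv : ‖v‖ ≤ 1)
    (h : ‖u + v‖ = 2) : u = v ∧ ‖u‖ = 1 := by
  have hadd := h ▸ norm_add_le u v
  have hu1 : ‖u‖ = 1 := by linarith
  have hv1 : ‖v‖ = 1 := by linarith
  refine ⟨?_, hu1⟩
  have hsq : Complex.normSq (u + v) = 4 := by rw [sq_abs_eq h]; norm_num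
  have hnu : Complex.normSq u = 1 := by rw [sq_abs_eq hu1]; norm_num
  have hnv : Complex.normSq v = 1 := by rw [sq_abs_eq hv1]; norm_num
  have hre : (u * starRingEnd ℂ v).re = 1 := by
    simp only [Complex.normSq_add] at hsq
    rw [hnu, hnv] at hsq
    linarith
  have habs : ‖u * starRingEnd ℂ v‖ = 1 := by
    simp [norm_mul, hu1, hv1]
  have him : (u * starRingEnd ℂ v).im = 0 := by
    have h2 : Complex.normSq (u * starRingEnd ℂ v) = 1 := by rw [sq_abs_eq habs]; norm_num
    rw [Complex.normSq_apply, hre] at h2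
    nlinarith
  have hw : u * starRingEnd ℂ v = 1 := Complex.ext (by simpa using hre) (by simpa using him)
  have hvv : starRingEnd ℂ v * v = 1 := by
    have h1 : Complex.normSq v = 1 := by rw [sq_abs_eq hv1]; norm_num
    rw [mul_comm, Complex.mul_conj, h1, Complex.ofReal_one]
  calc u = u * (starRingEnd ℂ v * v) := by rw [hvv, mul_one]
    _ = (u * starRingEnd ℂ v) * v := by ring
    _ = v := by rw [hw, one_mul]


lemma star_dist_le {u v : ℂ} {t s : ℝ} (ht : 0 ≤ t) (ht1 : t ≤ 1) (hs : 0 ≤ s) (hs1 : s ≤ 1)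
    (hu : ‖u‖ ≤ 1) (hv : ‖v‖ ≤ 1) (huv : ‖u - v‖ ≤ 1) :
    ‖(t : ℂ) * u - (s : ℂ) * v‖ ≤ 1 := by
  rcases le_total s t with hle | hle
  · have heq : (t : ℂ) * u - (s : ℂ) * v = (s : ℂ) * (u - v) + ((t - s : ℝ) : ℂ) * u := by
      push_cast; ring
    rw [heq]
    have hb1 : ‖(s : ℂ) * (u - v)‖ ≤ s := by
      rw [norm_mul, Complex.norm_real, Real.norm_eq_abs, abs_of_nonneg hs]
      calc s * ‖u - v‖ ≤ s * 1 := mul_le_mul_of_nonneg_left huv hs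
        _ = s := mul_one s
    have hb2 : ‖((t - s : ℝ) : ℂ) * u‖ ≤ t - s := by
      rw [norm_mul, Complex.norm_real, Real.norm_eq_abs, abs_of_nonneg (by linarith : (0:ℝ) ≤ t - s)]
      calc (t - s) * ‖u‖ ≤ (t - s) * 1 :=
            mul_le_mul_of_nonneg_left hu (by linarith)
        _ = t - s := mul_one _
    calc ‖_‖ ≤ ‖(s : ℂ) * (u - v)‖ +
          ‖((t - s : ℝ) : ℂ) * u‖ := norm_add_le _ _
      _ ≤ s + (t - s) := add_le_add hb1 hb2
      _ ≤ 1 := by linarith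
  · have heq : (t : ℂ) * u - (s : ℂ) * v = (t : ℂ) * (u - v) + ((s - t : ℝ) : ℂ) * (-v) := by
      push_cast; ring
    rw [heq]
    have hb1 : ‖(t : ℂ) * (u - v)‖ ≤ t := by
      rw [norm_mul, Complex.norm_real, Real.norm_eq_abs, abs_of_nonneg ht]
      calc t * ‖u - v‖ ≤ t * 1 := mul_le_mul_of_nonneg_left huv ht
        _ = t := mul_one t
    have hb2 : ‖((s - t : ℝ) : ℂ) * (-v)‖ ≤ s - t := by
      rw [norm_mul, Complex.norm_real, Real.norm_eq_abs, abs_of_nonneg (by linarith : (0:ℝ) ≤ s - t),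
        norm_neg]
      calc (s - t) * ‖v‖ ≤ (s - t) * 1 :=
            mul_le_mul_of_nonneg_left hv (by linarith)
        _ = s - t := mul_one _
    calc ‖_‖ ≤ ‖(t : ℂ) * (u - v)‖ +
          ‖((s - t : ℝ) : ℂ) * (-v)‖ := norm_add_le _ _
      _ ≤ t + (s - t) := add_le_add hb1 hb2
      _ ≤ 1 := by linarith

section TopologicalHelpers
variable {X : Type*} [TopologicalSpace X] [CompactSpace X]

lemma abs_sub_le_diam (f : C(X, ℂ)) (x y : X) :
    ‖f x - f y‖ ≤ Metric.diam (Set.range ⇑f) := by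
  rw [← Complex.dist_eq]
  exact Metric.dist_le_diam_of_mem (isCompact_range f.continuous).isBounded
    (mem_range_self x) (mem_range_self y)

lemma exists_abs_sub_eq_diam [Nonempty X] (f : C(X, ℂ)) :
    ∃ u v : X, ‖f u - f v‖ = Metric.diam (Set.range ⇑f) := by
  have hcont : Continuous (fun p : X × X => dist (f p.1) (f p.2)) :=
    (f.continuous.comp continuous_fst).dist (f.continuous.comp continuous_snd)
  obtain ⟨⟨u, v⟩, -, hmax⟩ := IsCompact.exists_isMaxOn (isCompact_univ (X := X × X))
    univ_nonempty hcont.continuousOn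
  refine ⟨u, v, le_antisymm (abs_sub_le_diam f u v) ?_⟩
  rw [← Complex.dist_eq]
  apply Metric.diam_le_of_forall_dist_le dist_nonneg
  rintro a ⟨x, rfl⟩ b ⟨y, rfl⟩
  have h := hmax (mem_univ ((x, y) : X × X))
  simpa using h

lemma diam_range_smul_le (f : C(X, ℂ)) (c : ℂ) :
    Metric.diam (Set.range ⇑(c • f)) ≤ ‖c‖ * Metric.diam (Set.range ⇑f) := by
  apply Metric.diam_le_of_forall_dist_le
    (mul_nonneg (norm_nonneg c) Metric.diam_nonneg)
  rintro a ⟨x, rfl⟩ b ⟨y, rfl⟩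
  have h1 : (c • f) x - (c • f) y = c * (f x - f y) := by simp [mul_sub]
  rw [Complex.dist_eq, h1, norm_mul]
  exact mul_le_mul_of_nonneg_left (abs_sub_le_diam f x y) (norm_nonneg c)

lemma diam_range_smul (f : C(X, ℂ)) {c : ℂ} (hc : c ≠ 0) :
    Metric.diam (Set.range ⇑(c • f)) = ‖c‖ * Metric.diam (Set.range ⇑f) := by
  refine le_antisymm (diam_range_smul_le f c) ?_
  have h2 := diam_range_smul_le (c • f) c⁻¹
  rw [inv_smul_smul₀ hc, norm_inv] at h2
  have hca : 0 < ‖c‖ := norm_pos_iff.2 hc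
  calc ‖c‖ * Metric.diam (range ⇑f)
      ≤ ‖c‖ * ((‖c‖)⁻¹ * Metric.diam (range ⇑(c • f))) :=
        mul_le_mul_of_nonneg_left h2 (le_of_lt hca)
    _ = Metric.diam (range ⇑(c • f)) := by field_simp

lemma pair_cases {X : Type*} {a b x y : X} (hab : a ≠ b) (h : ({a, b} : Set X) = {x, y}) :
    (a = x ∧ b = y) ∨ (a = y ∧ b = x) := by
  have ha : a = x ∨ a = y := by
    have : a ∈ ({x, y} : Set X) := by rw [← h]; simp
    simpa using this
  have hb : b = x ∨ b = y := by
    have : b ∈ ({x, y} : Set X) := by rw [← h]; simp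
    simpa using this
  have hx : x = a ∨ x = b := by
    have : x ∈ ({a, b} : Set X) := by rw [h]; simp
    simpa using this
  have hy : y = a ∨ y = b := by
    have : y ∈ ({a, b} : Set X) := by rw [h]; simp
    simpa using this
  rcases ha with rfl | rfl
  · rcases hb with rfl | rfl
    · exact absurd rfl hab
    · exact Or.inl ⟨rfl, rfl⟩
  · rcases hb with rfl | rfl
    · exact Or.inr ⟨rfl, rfl⟩
    · rcases hx with rfl | rfl
      · exact Or.inr ⟨rfl, rfl⟩
      · exact absurd rfl hab

variable {X : Type*} [TopologicalSpace X] [CompactSpace X] [T2Space X]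

lemma urysohn_complex {s t : Set X} (hs : IsClosed s) (ht : IsClosed t) (hd : Disjoint s t) :
    ∃ f : C(X, ℂ), (∀ x ∈ s, f x = 0) ∧ (∀ x ∈ t, f x = 1) ∧
      ∀ x, ∃ r : ℝ, 0 ≤ r ∧ r ≤ 1 ∧ f x = (r : ℂ) := by
  obtain ⟨g, hg0, hg1, hg01⟩ := exists_continuous_zero_one_of_isClosed hs ht hd
  refine ⟨⟨fun x => (g x : ℂ), Complex.continuous_ofReal.comp g.continuous⟩, ?_, ?_, ?_⟩
  · intro x hx; simp [hg0 hx]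
  · intro x hx; simp [hg1 hx]
  · intro x; exact ⟨g x, (hg01 x).1, (hg01 x).2, rfl⟩

lemma exists_disjoint_opens {n : ℕ} (w : Fin n → X) (hinj : Function.Injective w) :
    ∃ U : Fin n → Set X, (∀ i, IsOpen (U i)) ∧ (∀ i, w i ∈ U i) ∧
      ∀ i j, i ≠ j → Disjoint (U i) (U j) := by
  have H : ∀ i j : Fin n, ∃ AB : Set X × Set X, IsOpen AB.1 ∧ IsOpen AB.2 ∧
      (i ≠ j → w i ∈ AB.1 ∧ w j ∈ AB.2 ∧ Disjoint AB.1 AB.2) := by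
    intro i j
    by_cases h : i = j
    · exact ⟨(univ, univ), isOpen_univ, isOpen_univ, fun hn => absurd h hn⟩
    · obtain ⟨A, B, hA, hB, hwA, hwB, hAB⟩ := t2_separation (hinj.ne h)
      exact ⟨(A, B), hA, hB, fun _ => ⟨hwA, hwB, hAB⟩⟩
  choose AB hop1 hop2 hsep using H
  refine ⟨fun i => ⋂ j, (if i = j then univ else (AB i j).1 ∩ (AB j i).2), ?_, ?_, ?_⟩
  · intro i
    apply isOpen_iInter_of_finite
    intro j
    by_cases h : i = j
    · simp [h]
    · simp only [if_neg h]
      exact (hop1 i j).inter (hop2 j i)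
  · intro i
    apply mem_iInter.2
    intro j
    by_cases h : i = j
    · simp [h]
    · simp only [if_neg h]
      exact ⟨(hsep i j h).1, (hsep j i (Ne.symm h)).2.1⟩
  · intro i j hij
    apply Set.disjoint_left.2
    intro x hxi hxj
    have h1 : x ∈ (AB i j).1 := by
      have h := mem_iInter.1 hxi j
      rw [if_neg hij] at h
      exact h.1
    have h2 : x ∈ (AB i j).2 := by
      have h := mem_iInter.1 hxj i
      rw [if_neg (Ne.symm hij)] at h
      exact h.2
    exact Set.disjoint_left.1 (hsep i j hij).2.2 h1 h2


variable {X : Type*} [TopologicalSpace X] [CompactSpace X] [T2Space X]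

lemma exists_bump {n : ℕ} [NeZero n] (w : Fin n → X) (hinj : Function.Injective w)
    (Z : Set X) (hZc : IsClosed Z) (hZ : ∀ i, w i ∉ Z) (v : Fin n → ℂ) :
    ∃ g : C(X, ℂ), (∀ i, g (w i) = v i) ∧ (∀ x ∈ Z, g x = 0) ∧
      ∀ x, ∃ i : Fin n, ∃ t : ℝ, 0 ≤ t ∧ t ≤ 1 ∧ g x = (t : ℂ) * v i := by
  obtain ⟨U, hUo, hUm, hUd⟩ := exists_disjoint_opens w hinj
  have key : ∀ i : Fin n, ∃ h : C(X, ℂ), (∀ x ∈ (U i)ᶜ ∪ Z, h x = 0) ∧ h (w i) = 1 ∧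
      ∀ x, ∃ r : ℝ, 0 ≤ r ∧ r ≤ 1 ∧ h x = (r : ℂ) := by
    intro i
    have hclosed : IsClosed ((U i)ᶜ ∪ Z) := (hUo i).isClosed_compl.union hZc
    have hdisj : Disjoint ((U i)ᶜ ∪ Z) ({w i} : Set X) := by
      rw [Set.disjoint_right]
      intro x hx
      simp only [mem_singleton_iff] at hx
      subst hx
      simp only [mem_union, mem_compl_iff, not_or]
      exact ⟨fun hc => hc (hUm i), hZ i⟩
    obtain ⟨h, h0, h1, h01⟩ := urysohn_complex hclosed isClosed_singleton hdisj
    exact ⟨h, h0, h1 _ rfl, h01⟩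
  choose h h0 h1 h01 using key
  set g : C(X, ℂ) := ∑ i : Fin n, v i • h i with hg
  have happ : ∀ x, g x = ∑ i : Fin n, v i * h i x := by
    intro x
    rw [hg]
    simp [ContinuousMap.sum_apply]
  have hsupp : ∀ i x, h i x ≠ 0 → x ∈ U i := by
    intro i x hne
    by_contra hc
    exact hne (h0 i x (Or.inl hc))
  refine ⟨g, ?_, ?_, ?_⟩
  · intro j
    rw [happ]
    rw [Finset.sum_eq_single j]
    · rw [h1 j, mul_one]
    · intro i _ hij
      have : h i (w j) = 0 := by
        by_contra hc
        have hmem := hsupp i _ hc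
        exact Set.disjoint_left.1 (hUd i j hij) hmem (hUm j)
      rw [this, mul_zero]
    · intro hc
      exact absurd (Finset.mem_univ j) hc
  · intro x hx
    rw [happ]
    apply Finset.sum_eq_zero
    intro i _
    rw [h0 i x (Or.inr hx), mul_zero]
  · intro x
    by_cases hex : ∃ i, h i x ≠ 0
    · obtain ⟨i, hi⟩ := hex
      obtain ⟨r, hr0, hr1, hr⟩ := h01 i x
      refine ⟨i, r, hr0, hr1, ?_⟩
      rw [happ, Finset.sum_eq_single i]
      · rw [hr, mul_comm]
      · intro k _ hki
        have : h k x = 0 := by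
          by_contra hc
          exact Set.disjoint_left.1 (hUd k i hki) (hsupp k x hc) (hsupp i x hi)
        rw [this, mul_zero]
      · intro hc; exact absurd (Finset.mem_univ i) hc
    · push_neg at hex
      refine ⟨⟨0, Nat.pos_of_ne_zero (NeZero.ne n)⟩, 0, le_refl 0, zero_le_one, ?_⟩
      rw [happ]
      simp only [Complex.ofReal_zero, zero_mul]
      apply Finset.sum_eq_zero
      intro i _
      rw [hex i, mul_zero]

variable {X : Type*} [TopologicalSpace X] [CompactSpace X] [T2Space X]

lemma mem_diamSet_iff (f : C(X, ℂ)) {a b : X} (hab : a ≠ b) :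
    ({a, b} : Set X) ∈ diamSet f ↔
      ‖f a - f b‖ = Metric.diam (Set.range ⇑f) := by
  constructor
  · rintro ⟨x, y, hxy, hs, habs⟩
    rcases pair_cases hab hs with ⟨rfl, rfl⟩ | ⟨rfl, rfl⟩
    · exact habs
    · exact (norm_sub_rev _ _).trans habs
  · intro h
    exact ⟨a, b, hab, rfl, h⟩

lemma mem_diamSet_smul (f : C(X, ℂ)) {c : ℂ} (hc : c ≠ 0) {s : Set X}
    (h : s ∈ diamSet f) : s ∈ diamSet (c • f) := by
  obtain ⟨x, y, hxy, rfl, habs⟩ := h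
  refine ⟨x, y, hxy, rfl, ?_⟩
  have h1 : (c • f) x - (c • f) y = c * (f x - f y) := by
    simp [mul_sub]
  rw [h1, norm_mul, habs, diam_range_smul f hc]

lemma mem_diamSet_of_diam_zero (f : C(X, ℂ)) (h : Metric.diam (Set.range ⇑f) = 0)
    {a b : X} (hab : a ≠ b) : ({a, b} : Set X) ∈ diamSet f := by
  refine ⟨a, b, hab, rfl, le_antisymm ?_ ?_⟩
  · rw [h]; exact h ▸ abs_sub_le_diam f a b
  · rw [h]; exact norm_nonneg _

lemma phase_lemma (φ : C(X, ℂ) →ₗ[ℂ] C(X, ℂ)) (hdp : DiamPreserving ⇑φ)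
    {x y a b : X} (hxy : x ≠ y) (hab : a ≠ b)
    (hfwd : ∀ f : C(X, ℂ), ({x, y} : Set X) ∈ diamSet f →
      ({a, b} : Set X) ∈ diamSet (φ f)) :
    ∃ α : ℂ, ‖α‖ = 1 ∧ ∀ f : C(X, ℂ), ({x, y} : Set X) ∈ diamSet f →
      φ f a - φ f b = α * (f x - f y) := by
  -- the basic Urysohn function
  obtain ⟨f₀, hf₀0, hf₀1, hf₀01⟩ := urysohn_complex (isClosed_singleton (x := y))
    (isClosed_singleton (x := x)) (by simp [disjoint_singleton, Ne.symm hxy])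
  have hf₀x : f₀ x = 1 := hf₀1 x rfl
  have hf₀y : f₀ y = 0 := hf₀0 y rfl
  have hd0 : Metric.diam (Set.range ⇑f₀) = 1 := by
    refine le_antisymm (Metric.diam_le_of_forall_dist_le zero_le_one ?_) ?_
    · rintro u ⟨s, rfl⟩ w ⟨t, rfl⟩
      obtain ⟨r1, hr10, hr11, hr1⟩ := hf₀01 s
      obtain ⟨r2, hr20, hr21, hr2⟩ := hf₀01 t
      rw [Complex.dist_eq, hr1, hr2]
      rw [← Complex.ofReal_sub, Complex.norm_real, Real.norm_eq_abs]
      rw [abs_le]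
      constructor <;> linarith
    · have := abs_sub_le_diam f₀ x y
      rw [hf₀x, hf₀y] at this
      simpa using this
  have hp₀ : ({x, y} : Set X) ∈ diamSet f₀ := by
    rw [mem_diamSet_iff f₀ hxy, hf₀x, hf₀y, hd0]
    simp
  set α := φ f₀ a - φ f₀ b with hα
  have hα1 : ‖α‖ = 1 := by
    have := (mem_diamSet_iff (φ f₀) hab).1 (hfwd f₀ hp₀)
    rw [← hα] at this
    rw [this, hdp f₀, hd0]
  refine ⟨α, hα1, ?_⟩
  -- normalized case
  have hnorm : ∀ f : C(X, ℂ), Metric.diam (Set.range ⇑f) = 1 → f x - f y = 1 →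
      φ f a - φ f b = α := by
    intro f hdf hfxy
    set m := (2⁻¹ : ℂ) • (f + f₀) with hm
    have hmval : ∀ z : X, m z = (f z + f₀ z) / 2 := by
      intro z
      rw [hm]
      simp only [ContinuousMap.smul_apply, ContinuousMap.add_apply, smul_eq_mul]
      ring
    have hmxy : m x - m y = 1 := by
      rw [hmval, hmval, hf₀x, hf₀y]
      field_simp
      linear_combination hfxy
    have hdm : Metric.diam (Set.range ⇑m) = 1 := by
      refine le_antisymm (Metric.diam_le_of_forall_dist_le zero_le_one ?_) ?_
      · rintro u ⟨s, rfl⟩ v2 ⟨t, rfl⟩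
        rw [Complex.dist_eq, hmval, hmval]
        have h1 : ‖f s - f t‖ ≤ 1 := hdf ▸ abs_sub_le_diam f s t
        have h2 : ‖f₀ s - f₀ t‖ ≤ 1 := hd0 ▸ abs_sub_le_diam f₀ s t
        have h3 : (f s + f₀ s) / 2 - (f t + f₀ t) / 2 =
            ((f s - f t) + (f₀ s - f₀ t)) / 2 := by ring
        rw [h3, norm_div, Complex.norm_two]
        have h4 := norm_add_le (f s - f t) (f₀ s - f₀ t)
        linarith
      · have := abs_sub_le_diam m x y
        rw [hmxy] at this
        simpa using this
    have hpm : ({x, y} : Set X) ∈ diamSet m := by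
      rw [mem_diamSet_iff m hxy, hmxy, hdm]
      simp
    have himg : ‖φ m a - φ m b‖ = 1 := by
      rw [(mem_diamSet_iff (φ m) hab).1 (hfwd m hpm), hdp m, hdm]
    have hφm : φ m = (2⁻¹ : ℂ) • (φ f + φ f₀) := by
      rw [hm, map_smul, map_add]
    have hval : φ m a - φ m b = 2⁻¹ * ((φ f a - φ f b) + α) := by
      rw [hφm, hα]
      simp only [ContinuousMap.smul_apply, ContinuousMap.add_apply, smul_eq_mul]
      ring
    rw [hval] at himg
    rw [norm_mul] at himg
    have habs2 : ‖(φ f a - φ f b) + α‖ = 2 := by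
      have h2i : ‖(2⁻¹ : ℂ)‖ = 2⁻¹ := by
        rw [norm_inv, Complex.norm_two]
      rw [h2i] at himg
      linarith
    have hu : ‖φ f a - φ f b‖ ≤ 1 := by
      have := abs_sub_le_diam (φ f) a b
      rw [hdp f, hdf] at this
      exact this
    exact (unit_add_eq_two hu (le_of_eq hα1) habs2).1
  intro f hp
  have hD := (mem_diamSet_iff f hxy).1 hp
  by_cases hD0 : Metric.diam (Set.range ⇑f) = 0
  · have h1 : f x - f y = 0 := by
      exact norm_eq_zero.1 (hD.trans hD0)
    have h2 : φ f a - φ f b = 0 := by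
      apply norm_eq_zero.1
      apply le_antisymm _ (norm_nonneg _)
      calc ‖φ f a - φ f b‖ ≤ Metric.diam (Set.range ⇑(φ f)) :=
          abs_sub_le_diam _ a b
        _ = 0 := by rw [hdp f, hD0]
    rw [h1, h2, mul_zero]
  · set w := f x - f y with hw
    have hwne : w ≠ 0 := by
      intro hc
      rw [hc, norm_zero] at hD
      exact hD0 hD.symm
    have h1 : φ (w⁻¹ • f) a - φ (w⁻¹ • f) b = α := by
      apply hnorm
      · rw [diam_range_smul f (inv_ne_zero hwne), norm_inv, ← hD]
        exact inv_mul_cancel₀ (norm_ne_zero_iff.2 hwne)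
      · show (w⁻¹ • f) x - (w⁻¹ • f) y = 1
        have : (w⁻¹ • f) x - (w⁻¹ • f) y = w⁻¹ * (f x - f y) := by simp [mul_sub]
        rw [this, ← hw, inv_mul_cancel₀ hwne]
    rw [map_smul] at h1
    have h2 : (w⁻¹ • φ f) a - (w⁻¹ • φ f) b = w⁻¹ * (φ f a - φ f b) := by simp [mul_sub]
    rw [h2] at h1
    field_simp at h1
    rw [h1, mul_comm]

lemma diam_le_of_vals01 (f : C(X, ℂ)) (h : ∀ z, ∃ r : ℝ, 0 ≤ r ∧ r ≤ 1 ∧ f z = (r : ℂ)) :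
    Metric.diam (Set.range ⇑f) ≤ 1 := by
  apply Metric.diam_le_of_forall_dist_le zero_le_one
  rintro u ⟨s, rfl⟩ v ⟨t, rfl⟩
  obtain ⟨r1, hr10, hr11, hr1⟩ := h s
  obtain ⟨r2, hr20, hr21, hr2⟩ := h t
  rw [Complex.dist_eq, hr1, hr2, ← Complex.ofReal_sub, Complex.norm_real, Real.norm_eq_abs, abs_le]
  constructor <;> linarith

lemma sep_lemma {t₁ t₂ s₁ s₂ : X} (ht : t₁ ≠ t₂) (hs : s₁ ≠ s₂)
    (h : ∀ g : C(X, ℂ), ({t₁, t₂} : Set X) ∈ diamSet g →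
      ({s₁, s₂} : Set X) ∈ diamSet g) :
    ({s₁, s₂} : Set X) = {t₁, t₂} := by
  set A : Set X := {s₁, s₂} \ {t₁, t₂} with hA
  have hAfin : A.Finite := ((Set.finite_singleton s₂).insert s₁).diff
  have hAclosed : IsClosed A := hAfin.isClosed
  have hC₂closed : IsClosed (A ∪ {t₂}) := hAclosed.union isClosed_singleton
  have ht₁ : t₁ ∉ A ∪ {t₂} := by
    simp only [mem_union, mem_singleton_iff, not_or]
    exact ⟨fun hc => hc.2 (Or.inl rfl), ht⟩
  obtain ⟨U, V, hUo, hVo, hsU, htV, hUV⟩ :=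
    NormalSpace.normal {t₁} (A ∪ {t₂}) isClosed_singleton hC₂closed
      (by simpa [Set.disjoint_left] using ht₁)
  have ht₁U : t₁ ∈ U := hsU rfl
  -- h1 : Urysohn with value 1 at t₁, 0 outside U
  obtain ⟨h1, h10, h11, h101⟩ := urysohn_complex (isClosed_compl_iff.2 hUo)
    (isClosed_singleton (x := t₁))
    (by rw [Set.disjoint_right]; intro x hx; simp only [mem_singleton_iff] at hx;
        subst hx; simp [ht₁U])
  -- h2 : Urysohn with value 1 on A, 0 on {t₁,t₂} ∪ Vᶜ
  have hclosed2 : IsClosed (({t₁, t₂} : Set X) ∪ Vᶜ) :=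
    (((Set.finite_singleton t₂).insert t₁).isClosed).union
      (isClosed_compl_iff.2 hVo)
  obtain ⟨h2, h20, h21, h201⟩ := urysohn_complex hclosed2 hAclosed (by
    rw [Set.disjoint_right]
    intro x hx
    simp only [mem_union, mem_compl_iff, not_or]
    constructor
    · intro hc
      rw [hA] at hx
      exact hx.2 hc
    · intro hc
      exact hc (htV (Or.inl hx)))
  set g : C(X, ℂ) := h1 + (2⁻¹ : ℂ) • h2 with hg
  have hgval : ∀ z, g z = h1 z + 2⁻¹ * h2 z := by
    intro z
    rw [hg]; simp
  have hsupp1 : ∀ z, z ∉ U → h1 z = 0 := fun z hz => h10 z hz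
  have hsupp2 : ∀ z ∈ ({t₁, t₂} : Set X) ∪ Vᶜ, h2 z = 0 := h20
  have hgt₁ : g t₁ = 1 := by
    rw [hgval, h11 t₁ rfl, hsupp2 t₁ (Or.inl (Or.inl rfl))]
    ring
  have hgt₂ : g t₂ = 0 := by
    have hVt₂ : t₂ ∈ V := htV (Or.inr rfl)
    have : t₂ ∉ U := fun hc => Set.disjoint_left.1 hUV hc hVt₂
    rw [hgval, hsupp1 t₂ this, hsupp2 t₂ (Or.inl (Or.inr rfl))]
    ring
  have hgA : ∀ s ∈ A, g s = 2⁻¹ := by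
    intro s hsA
    have hVs : s ∈ V := htV (Or.inl hsA)
    have : s ∉ U := fun hc => Set.disjoint_left.1 hUV hc hVs
    rw [hgval, hsupp1 s this, h21 s hsA]
    ring
  have hg01 : ∀ z, ∃ r : ℝ, 0 ≤ r ∧ r ≤ 1 ∧ g z = (r : ℂ) := by
    intro z
    obtain ⟨r1, hr10, hr11, hr1⟩ := h101 z
    obtain ⟨r2, hr20, hr21, hr2⟩ := h201 z
    by_cases hzU : z ∈ U
    · have hzV : z ∉ V := fun hc => Set.disjoint_left.1 hUV hzU hc
      have : h2 z = 0 := hsupp2 z (Or.inr hzV)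
      exact ⟨r1, hr10, hr11, by rw [hgval, this, hr1]; ring⟩
    · have : h1 z = 0 := hsupp1 z hzU
      refine ⟨r2 / 2, by linarith, by linarith, ?_⟩
      rw [hgval, this, hr2]
      push_cast
      ring
  have hdg : Metric.diam (Set.range ⇑g) = 1 := by
    refine le_antisymm (diam_le_of_vals01 g hg01) ?_
    have := abs_sub_le_diam g t₁ t₂
    rw [hgt₁, hgt₂] at this
    simpa using this
  have htg : ({t₁, t₂} : Set X) ∈ diamSet g := by
    rw [mem_diamSet_iff g ht, hgt₁, hgt₂, hdg]
    simp
  have hsg := (mem_diamSet_iff g hs).1 (h g htg)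
  rw [hdg] at hsg
  have hkey : ∀ s s' : X, s ∉ ({t₁, t₂} : Set X) → s ∈ ({s₁, s₂} : Set X) →
      ‖g s - g s'‖ ≤ 2⁻¹ := by
    intro s s' hsnot hsmem
    have hgs : g s = 2⁻¹ := hgA s ⟨hsmem, hsnot⟩
    obtain ⟨r, hr0, hr1, hr⟩ := hg01 s'
    rw [hgs, hr]
    have : (2⁻¹ : ℂ) - (r : ℂ) = ((2⁻¹ - r : ℝ) : ℂ) := by push_cast; ring
    rw [this, Complex.norm_real, Real.norm_eq_abs, abs_le]
    constructor <;> linarith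
  have hs₁ : s₁ ∈ ({t₁, t₂} : Set X) := by
    by_contra hc
    have := hkey s₁ s₂ hc (Or.inl rfl)
    rw [hsg] at this
    norm_num at this
  have hs₂ : s₂ ∈ ({t₁, t₂} : Set X) := by
    by_contra hc
    have h2 := hkey s₂ s₁ hc (Or.inr rfl)
    rw [norm_sub_rev, hsg] at h2
    norm_num at h2
  rcases hs₁ with rfl | hs₁
  · rcases hs₂ with rfl | hs₂
    · exact absurd rfl hs
    · simp only [mem_singleton_iff] at hs₂
      subst hs₂
      rfl
  · simp only [mem_singleton_iff] at hs₁
    subst hs₁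
    rcases hs₂ with rfl | hs₂
    · exact Set.pair_comm _ _
    · simp only [mem_singleton_iff] at hs₂
      exact absurd hs₂.symm hs

lemma converse_lemma [Nonempty X] (e : C(X, ℂ) ≃ₗ[ℂ] C(X, ℂ))
    (hdp : DiamPreserving (fun f => e f)) {a b : X} (hab : a ≠ b) :
    ∃ s₁ s₂ : X, s₁ ≠ s₂ ∧ ∀ g : C(X, ℂ), ({a, b} : Set X) ∈ diamSet g →
      ({s₁, s₂} : Set X) ∈ diamSet (e.symm g) := by
  have hdps : ∀ g : C(X, ℂ), Metric.diam (Set.range ⇑(e.symm g)) =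
      Metric.diam (Set.range ⇑g) := by
    intro g
    have := hdp (e.symm g)
    simpa using this.symm
  -- index type
  set ι := {g : C(X, ℂ) // g a - g b = 1 ∧ Metric.diam (Set.range ⇑g) = 1} with hι
  have hιne : Nonempty ι := by
    obtain ⟨g₀, hg0, hg1, hg01⟩ := urysohn_complex (isClosed_singleton (x := b))
      (isClosed_singleton (x := a))
      (by simp [disjoint_singleton, Ne.symm hab])
    refine ⟨⟨g₀, ?_, ?_⟩⟩
    · rw [hg1 a rfl, hg0 b rfl, sub_zero]
    · refine le_antisymm (diam_le_of_vals01 g₀ hg01) ?_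
      have := abs_sub_le_diam g₀ a b
      rw [hg1 a rfl, hg0 b rfl] at this
      simpa using this
  set F : ι → Set (X × X) := fun g =>
    {uv | ‖e.symm g.val uv.1 - e.symm g.val uv.2‖ = 1} with hF
  have hFclosed : ∀ g : ι, IsClosed (F g) := by
    intro g
    apply isClosed_eq _ continuous_const
    exact continuous_norm.comp
      (((e.symm g.val).continuous.comp continuous_fst).sub
        ((e.symm g.val).continuous.comp continuous_snd))
  have hFne : ∀ g : ι, (F g).Nonempty := by
    intro g
    obtain ⟨u, v, huv⟩ := exists_abs_sub_eq_diam (e.symm g.val)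
    refine ⟨(u, v), ?_⟩
    rw [hF]
    simp only [mem_setOf_eq]
    rw [huv, hdps, g.2.2]
  have hdir : Directed (· ⊇ ·) F := by
    intro g g'
    set m : C(X, ℂ) := (2⁻¹ : ℂ) • (g.val + g'.val) with hm
    have hmab : m a - m b = 1 := by
      rw [hm]
      simp only [ContinuousMap.smul_apply, ContinuousMap.add_apply, smul_eq_mul]
      have h1 := g.2.1
      have h2 := g'.2.1
      linear_combination 2⁻¹ * h1 + 2⁻¹ * h2
    have hmd : Metric.diam (Set.range ⇑m) = 1 := by
      refine le_antisymm (Metric.diam_le_of_forall_dist_le zero_le_one ?_) ?_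
      · rintro u ⟨s, rfl⟩ v ⟨t, rfl⟩
        rw [Complex.dist_eq]
        have hval : ∀ z : X, m z = 2⁻¹ * (g.val z + g'.val z) := by
          intro z; rw [hm]
          simp only [ContinuousMap.smul_apply, ContinuousMap.add_apply, smul_eq_mul]
        rw [hval, hval]
        have h3 : 2⁻¹ * (g.val s + g'.val s) - 2⁻¹ * (g.val t + g'.val t) =
            ((g.val s - g.val t) + (g'.val s - g'.val t)) / 2 := by ring
        rw [h3, norm_div, Complex.norm_two]
        have h1 : ‖g.val s - g.val t‖ ≤ 1 := by
          have := abs_sub_le_diam g.val s t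
          rw [g.2.2] at this
          exact this
        have h2 : ‖g'.val s - g'.val t‖ ≤ 1 := by
          have := abs_sub_le_diam g'.val s t
          rw [g'.2.2] at this
          exact this
        have h4 := norm_add_le (g.val s - g.val t) (g'.val s - g'.val t)
        linarith
      · have := abs_sub_le_diam m a b
        rw [hmab] at this
        simpa using this
    refine ⟨⟨m, hmab, hmd⟩, ?_, ?_⟩
    · -- F m ⊆ F g
      intro uv huv
      simp only [hF, mem_setOf_eq] at huv ⊢
      have hsm : e.symm m = (2⁻¹ : ℂ) • (e.symm g.val + e.symm g'.val) := by
        rw [hm, map_smul, map_add]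
      rw [hsm] at huv
      simp only [ContinuousMap.smul_apply, ContinuousMap.add_apply, smul_eq_mul] at huv
      set U := e.symm g.val uv.1 - e.symm g.val uv.2 with hU
      set V := e.symm g'.val uv.1 - e.symm g'.val uv.2 with hV
      have hsum : ‖U + V‖ = 2 := by
        have h5 : 2⁻¹ * (e.symm g.val uv.1 + e.symm g'.val uv.1) -
            2⁻¹ * (e.symm g.val uv.2 + e.symm g'.val uv.2) = (U + V) / 2 := by
          rw [hU, hV]; ring
        rw [h5, norm_div, Complex.norm_two] at huv
        linarith
      have hUle : ‖U‖ ≤ 1 := by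
        have := abs_sub_le_diam (e.symm g.val) uv.1 uv.2
        rw [hdps, g.2.2] at this
        exact this
      have hVle : ‖V‖ ≤ 1 := by
        have := abs_sub_le_diam (e.symm g'.val) uv.1 uv.2
        rw [hdps, g'.2.2] at this
        exact this
      have := norm_add_le U V
      linarith
    · intro uv huv
      simp only [hF, mem_setOf_eq] at huv ⊢
      have hsm : e.symm m = (2⁻¹ : ℂ) • (e.symm g.val + e.symm g'.val) := by
        rw [hm, map_smul, map_add]
      rw [hsm] at huv
      simp only [ContinuousMap.smul_apply, ContinuousMap.add_apply, smul_eq_mul] at huv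
      set U := e.symm g.val uv.1 - e.symm g.val uv.2 with hU
      set V := e.symm g'.val uv.1 - e.symm g'.val uv.2 with hV
      have hsum : ‖U + V‖ = 2 := by
        have h5 : 2⁻¹ * (e.symm g.val uv.1 + e.symm g'.val uv.1) -
            2⁻¹ * (e.symm g.val uv.2 + e.symm g'.val uv.2) = (U + V) / 2 := by
          rw [hU, hV]; ring
        rw [h5, norm_div, Complex.norm_two] at huv
        linarith
      have hUle : ‖U‖ ≤ 1 := by
        have := abs_sub_le_diam (e.symm g.val) uv.1 uv.2
        rw [hdps, g.2.2] at this
        exact this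
      have hVle : ‖V‖ ≤ 1 := by
        have := abs_sub_le_diam (e.symm g'.val) uv.1 uv.2
        rw [hdps, g'.2.2] at this
        exact this
      have := norm_add_le U V
      linarith
  obtain ⟨⟨s₁, s₂⟩, hmem⟩ :=
    IsCompact.nonempty_iInter_of_directed_nonempty_isCompact_isClosed (hι := hιne) F hdir hFne
      (fun g => (hFclosed g).isCompact) hFclosed
  have hmem' : ∀ g : ι, ‖e.symm g.val s₁ - e.symm g.val s₂‖ = 1 := by
    intro g
    have := mem_iInter.1 hmem g
    simpa [hF] using this
  have hs12 : s₁ ≠ s₂ := by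
    intro hc
    obtain ⟨g₀⟩ := hιne
    have := hmem' g₀
    rw [hc, sub_self, norm_zero] at this
    norm_num at this
  refine ⟨s₁, s₂, hs12, ?_⟩
  intro g hg
  by_cases hD : Metric.diam (Set.range ⇑g) = 0
  · exact mem_diamSet_of_diam_zero (e.symm g) (by rw [hdps, hD]) hs12
  · have habs := (mem_diamSet_iff g hab).1 hg
    set w := g a - g b with hw
    have hwne : w ≠ 0 := by
      intro hc
      rw [hc, norm_zero] at habs
      exact hD habs.symm
    have hg' : (w⁻¹ • g) a - (w⁻¹ • g) b = 1 := by
      simp only [ContinuousMap.smul_apply, smul_eq_mul]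
      rw [← mul_sub, ← hw, inv_mul_cancel₀ hwne]
    have hg'd : Metric.diam (Set.range ⇑(w⁻¹ • g)) = 1 := by
      rw [diam_range_smul g (inv_ne_zero hwne), norm_inv, ← habs]
      exact inv_mul_cancel₀ (norm_ne_zero_iff.2 hwne)
    have h1 := hmem' ⟨w⁻¹ • g, hg', hg'd⟩
    have h2 : e.symm (w⁻¹ • g) = w⁻¹ • e.symm g := by rw [map_smul]
    rw [h2] at h1
    simp only [ContinuousMap.smul_apply, smul_eq_mul] at h1
    rw [← mul_sub, norm_mul, norm_inv] at h1
    have h3 : ‖e.symm g s₁ - e.symm g s₂‖ = ‖w‖ := by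
      have hwpos : ‖w‖ ≠ 0 := norm_ne_zero_iff.2 hwne
      field_simp at h1
      linarith [h1]
    rw [mem_diamSet_iff (e.symm g) hs12, h3, hdps, ← habs]

lemma bump3 {X : Type*} [TopologicalSpace X] [CompactSpace X] [T2Space X]
    {a b c d : X} (hab : a ≠ b) (hac : a ≠ c) (had : a ≠ d)
    (hbc : b ≠ c) (hbd : b ≠ d) (hcd : c ≠ d)
    {w : ℂ} (hw : ‖w‖ = 1) :
    ∃ g : C(X, ℂ), g a = 1 ∧ g b = 0 ∧ g c = (1 + w) / 2 ∧ g d = (1 - w) / 2 ∧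
      Metric.diam (Set.range ⇑g) = 1 := by
  set pts : Fin 3 → X := ![a, c, d] with hpts
  set v : Fin 3 → ℂ := ![1, (1 + w) / 2, (1 - w) / 2] with hv
  have hptsinj : Function.Injective pts := by
    intro i j hij
    fin_cases i <;> fin_cases j
    · rfl
    · exact absurd (hij : a = c) hac
    · exact absurd (hij : a = d) had
    · exact absurd ((hij : c = a)).symm hac
    · rfl
    · exact absurd (hij : c = d) hcd
    · exact absurd ((hij : d = a)).symm had
    · exact absurd ((hij : d = c)).symm hcd
    · rfl
  have hZ : ∀ i, pts i ∉ ({b} : Set X) := by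
    intro i
    fin_cases i
    · exact fun hc => hab (mem_singleton_iff.1 hc)
    · exact fun hc => hbc (mem_singleton_iff.1 hc).symm
    · exact fun hc => hbd (mem_singleton_iff.1 hc).symm
  obtain ⟨g, hgvals, hgzero, hgstar⟩ := exists_bump pts hptsinj {b} isClosed_singleton hZ v
  have hga : g a = 1 := hgvals 0
  have hgc : g c = (1 + w) / 2 := hgvals 1
  have hgd : g d = (1 - w) / 2 := hgvals 2
  have hgb : g b = 0 := hgzero b rfl
  -- norms of values
  have habs1w : ‖1 + w‖ ≤ 2 := by
    calc ‖1 + w‖ ≤ ‖1‖ + ‖w‖ := norm_add_le _ _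
      _ = 2 := by rw [hw, norm_one]; norm_num
  have habs1w' : ‖1 - w‖ ≤ 2 := by
    calc ‖1 - w‖ ≤ ‖1 - 0‖ + ‖0 - w‖ :=
          norm_sub_le_norm_sub_add_norm_sub 1 0 w
      _ = 2 := by simp [hw]; norm_num
  have n0 : ‖(1 : ℂ)‖ ≤ 1 := by simp
  have n1 : ‖(1 + w) / 2‖ ≤ 1 := by
    rw [norm_div, Complex.norm_two]
    linarith
  have n2 : ‖(1 - w) / 2‖ ≤ 1 := by
    rw [norm_div, Complex.norm_two]
    linarith
  have hvnorm : ∀ i, ‖v i‖ ≤ 1 := by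
    intro i
    fin_cases i
    · exact n0
    · exact n1
    · exact n2
  have hvdiff : ∀ i j, ‖v i - v j‖ ≤ 1 := by
    have k1 : ‖(1 : ℂ) - (1 + w) / 2‖ ≤ 1 := by
      have : (1 : ℂ) - (1 + w) / 2 = (1 - w) / 2 := by ring
      rw [this, norm_div, Complex.norm_two]
      linarith
    have k2 : ‖(1 : ℂ) - (1 - w) / 2‖ ≤ 1 := by
      have : (1 : ℂ) - (1 - w) / 2 = (1 + w) / 2 := by ring
      rw [this, norm_div, Complex.norm_two]
      linarith
    have k3 : ‖(1 + w) / 2 - (1 - w) / 2‖ ≤ 1 := by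
      have : (1 + w) / 2 - (1 - w) / 2 = w := by ring
      rw [this, hw]
    have z0 : ‖(1:ℂ) - 1‖ ≤ 1 := by simp
    have z1 : ‖(1 + w)/2 - (1 + w)/2‖ ≤ 1 := by simp
    have z2 : ‖(1 - w)/2 - (1 - w)/2‖ ≤ 1 := by simp
    have k1' : ‖(1 + w)/2 - 1‖ ≤ 1 := by rw [norm_sub_rev]; exact k1
    have k2' : ‖(1 - w)/2 - 1‖ ≤ 1 := by rw [norm_sub_rev]; exact k2
    have k3' : ‖(1 - w)/2 - (1 + w)/2‖ ≤ 1 := by rw [norm_sub_rev]; exact k3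
    intro i j
    fin_cases i <;> fin_cases j
    · exact z0
    · exact k1
    · exact k2
    · exact k1'
    · exact z1
    · exact k3
    · exact k2'
    · exact k3'
    · exact z2
  have hdg : Metric.diam (Set.range ⇑g) = 1 := by
    refine le_antisymm (Metric.diam_le_of_forall_dist_le zero_le_one ?_) ?_
    · rintro u1 ⟨x1, rfl⟩ u2 ⟨x2, rfl⟩
      obtain ⟨i, t, ht0, ht1, hti⟩ := hgstar x1
      obtain ⟨j, s, hs0, hs1, hsj⟩ := hgstar x2
      rw [Complex.dist_eq, hti, hsj]
      exact star_dist_le ht0 ht1 hs0 hs1 (hvnorm i) (hvnorm j) (hvdiff i j)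
    · have := abs_sub_le_diam g a b
      rw [hga, hgb] at this
      simpa using this
  exact ⟨g, hga, hgb, hgc, hgd, hdg⟩

lemma pair_rep {X : Type*} {s : Set X} (h : ∃ a b : X, a ≠ b ∧ s = {a, b}) {x : X}
    (hx : x ∈ s) : ∃ y, x ≠ y ∧ s = {x, y} := by
  obtain ⟨a, b, hab, rfl⟩ := h
  rcases hx with rfl | hx
  · exact ⟨b, hab, rfl⟩
  · simp only [mem_singleton_iff] at hx
    subst hx
    exact ⟨a, hab.symm, Set.pair_comm a x⟩

lemma pair_eq_of_two_mem {X : Type*} {a b z₁ z₂ : X} (hz : z₁ ≠ z₂)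
    (h1 : z₁ ∈ ({a, b} : Set X)) (h2 : z₂ ∈ ({a, b} : Set X)) :
    ({z₁, z₂} : Set X) = {a, b} := by
  rcases h1 with rfl | h1
  · rcases h2 with rfl | h2
    · exact absurd rfl hz
    · simp only [mem_singleton_iff] at h2
      subst h2
      rfl
  · simp only [mem_singleton_iff] at h1
    subst h1
    rcases h2 with rfl | h2
    · exact Set.pair_comm _ _
    · simp only [mem_singleton_iff] at h2
      subst h2
      exact absurd rfl hz



end TopologicalHelpers
end Helpers

/-- Step 5: if two two-element subsets intersect, then so do their `G'`-images;
moreover, if they have exactly one element in common, then so do their images. -/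
theorem Gmap_inter_nonempty_of_inter_nonempty
    {X : Type*} [TopologicalSpace X] [CompactSpace X] [T2Space X]
    [FirstCountableTopology X]
    (h3 : ∃ a b c : X, a ≠ b ∧ a ≠ c ∧ b ≠ c)
    (φ : C(X, ℂ) →ₗ[ℂ] C(X, ℂ)) (hbij : Function.Bijective φ)
    (hdp : DiamPreserving (⇑φ))
    (G' : TwoSet X → TwoSet X) (hG'bij : Function.Bijective G')
    (hG' : ∀ p : TwoSet X, Gset (⇑φ) p.val = {(G' p).val})
    (p q : TwoSet X) :
    (p.val ∩ q.val ≠ ∅ → (G' p).val ∩ (G' q).val ≠ ∅) ∧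
      ((∃! z : X, z ∈ p.val ∩ q.val) →
        ∃! z : X, z ∈ (G' p).val ∩ (G' q).val) := by
  obtain ⟨x₀, y₀, z₀, _, _, _⟩ := h3
  haveI : Nonempty X := ⟨x₀⟩
  set e : C(X, ℂ) ≃ₗ[ℂ] C(X, ℂ) := LinearEquiv.ofBijective φ hbij with he
  have heφ : ∀ f : C(X, ℂ), e f = φ f := fun f => rfl
  have hdpe : DiamPreserving (fun f => e f) := by
    intro f
    exact hdp f
  have hφsymm : ∀ g : C(X, ℂ), φ (e.symm g) = g := by
    intro g
    rw [← heφ]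
    exact e.apply_symm_apply g
  -- main claim
  have main : ∀ p q : TwoSet X, p ≠ q → (p.val ∩ q.val).Nonempty →
      ((G' p).val ∩ (G' q).val).Nonempty := by
    intro p q hpq ⟨x, hxp, hxq⟩
    obtain ⟨y, hxy, hpval⟩ := pair_rep p.2 hxp
    obtain ⟨z, hxz, hqval⟩ := pair_rep q.2 hxq
    have hyz : y ≠ z := by
      intro hc
      subst hc
      exact hpq (Subtype.ext (hpval.trans hqval.symm))
    obtain ⟨a, b, hab, hGp⟩ := (G' p).2
    obtain ⟨c, d, hcd, hGq⟩ := (G' q).2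
    rw [hGp, hGq]
    by_contra hdisj
    rw [Set.not_nonempty_iff_eq_empty] at hdisj
    have hac : a ≠ c := fun hc => by
      rw [← Set.mem_empty_iff_false a, ← hdisj]
      exact ⟨Or.inl rfl, Or.inl hc⟩
    have had : a ≠ d := fun hc => by
      rw [← Set.mem_empty_iff_false a, ← hdisj]
      exact ⟨Or.inl rfl, Or.inr hc⟩
    have hbc : b ≠ c := fun hc => by
      rw [← Set.mem_empty_iff_false b, ← hdisj]
      exact ⟨Or.inr rfl, Or.inl hc⟩
    have hbd : b ≠ d := fun hc => by
      rw [← Set.mem_empty_iff_false b, ← hdisj]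
      exact ⟨Or.inr rfl, Or.inr hc⟩
    -- forward implications
    have hfwdp : ∀ f : C(X, ℂ), ({x, y} : Set X) ∈ diamSet f →
        ({a, b} : Set X) ∈ diamSet (φ f) := by
      intro f hf
      have h1 : (G' p).val ∈ Gset (⇑φ) p.val := by rw [hG' p]; rfl
      have := h1 f (by rw [hpval]; exact hf)
      rwa [hGp] at this
    have hfwdq : ∀ f : C(X, ℂ), ({x, z} : Set X) ∈ diamSet f →
        ({c, d} : Set X) ∈ diamSet (φ f) := by
      intro f hf
      have h1 : (G' q).val ∈ Gset (⇑φ) q.val := by rw [hG' q]; rfl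
      have := h1 f (by rw [hqval]; exact hf)
      rwa [hGq] at this
    -- phase constants
    obtain ⟨α, hα1, hαval⟩ := phase_lemma φ hdp hxy hab hfwdp
    obtain ⟨β, hβ1, hβval⟩ := phase_lemma φ hdp hxz hcd hfwdq
    have hαne : α ≠ 0 := fun hc => by rw [hc, norm_zero] at hα1; norm_num at hα1
    have hβne : β ≠ 0 := fun hc => by rw [hc, norm_zero] at hβ1; norm_num at hβ1
    -- converse implications
    have hconv : ∀ (r : TwoSet X) (a' b' : X) (ha'b' : a' ≠ b'),
        (G' r).val = {a', b'} →
        ∀ g : C(X, ℂ), ({a', b'} : Set X) ∈ diamSet g → r.val ∈ diamSet (e.symm g) := by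
      intro r a' b' ha'b' hGr g hg
      obtain ⟨s₁, s₂, hs12, hsprop⟩ := converse_lemma e hdpe ha'b'
      -- the pair {s₁,s₂} as TwoSet
      set r' : TwoSet X := ⟨{s₁, s₂}, s₁, s₂, hs12, rfl⟩ with hr'
      -- G' r' = G' r, hence r' = r
      have hfwdr' : ∀ f : C(X, ℂ), ({s₁, s₂} : Set X) ∈ diamSet f →
          (G' r').val ∈ diamSet (φ f) := by
        intro f hf
        have h1 : (G' r').val ∈ Gset (⇑φ) r'.val := by rw [hG' r']; rfl
        exact h1 f hf
      obtain ⟨a'', b'', ha''b'', hGr'⟩ := (G' r').2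
      have hsep : ({a'', b''} : Set X) = {a', b'} := by
        apply sep_lemma ha'b' ha''b''
        intro g' hg'
        have h2 := hfwdr' (e.symm g') (hsprop g' hg')
        rw [hφsymm g', hGr'] at h2
        exact h2
      have hG'eq : G' r' = G' r := by
        apply Subtype.ext
        rw [hGr', hGr, hsep]
      have hrr : r' = r := hG'bij.1 hG'eq
      have h3 := hsprop g hg
      rw [← hrr]
      exact h3
    -- the contradiction function
    set w : ℂ := -(β / α) with hwdef
    have hw1 : ‖w‖ = 1 := by
      have : ‖w‖ = ‖β / α‖ := norm_neg _
      rw [this, norm_div, hα1, hβ1]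
      norm_num
    obtain ⟨g, hga, hgb, hgc, hgd, hdg⟩ := bump3 hab hac had hbc hbd hcd hw1
    have hablem : ({a, b} : Set X) ∈ diamSet g := by
      rw [mem_diamSet_iff g hab, hga, hgb, hdg]
      simp
    have hcdlem : ({c, d} : Set X) ∈ diamSet g := by
      rw [mem_diamSet_iff g hcd, hgc, hgd, hdg]
      have : (1 + w) / 2 - (1 - w) / 2 = w := by ring
      rw [this, hw1]
    set f : C(X, ℂ) := e.symm g with hf
    have hpf : ({x, y} : Set X) ∈ diamSet f := by
      have := hconv p a b hab hGp g hablem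
      rwa [hpval] at this
    have hqf : ({x, z} : Set X) ∈ diamSet f := by
      have := hconv q c d hcd hGq g hcdlem
      rwa [hqval] at this
    have h1 := hαval f hpf
    have h2 := hβval f hqf
    rw [hφsymm g] at h1 h2
    rw [hga, hgb] at h1
    rw [hgc, hgd] at h2
    -- h1 : 1 - 0 = α * (f x - f y), h2 : (1+w)/2 - (1-w)/2 = β * (f x - f z)
    have hxy' : f x - f y = α⁻¹ := by
      have h1' : α * (f x - f y) = 1 := by rw [← h1]; ring
      calc f x - f y = α⁻¹ * (α * (f x - f y)) := by field_simp
        _ = α⁻¹ := by rw [h1', mul_one]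
    have hxz' : f x - f z = -α⁻¹ := by
      have h2' : β * (f x - f z) = w := by rw [← h2]; ring
      have : f x - f z = β⁻¹ * w := by
        calc f x - f z = β⁻¹ * (β * (f x - f z)) := by field_simp
          _ = β⁻¹ * w := by rw [h2']
      rw [this, hwdef]
      field_simp
    have hyzval : f y - f z = -(2 * α⁻¹) := by
      have : f y - f z = (f x - f z) - (f x - f y) := by ring
      rw [this, hxz', hxy']
      ring
    have habs2 : ‖f y - f z‖ = 2 := by
      rw [hyzval]
      have e1 : ‖-(2 * α⁻¹)‖ = ‖2 * α⁻¹‖ := norm_neg _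
      rw [e1, norm_mul, norm_inv, hα1, Complex.norm_two]
      norm_num
    have hdf : Metric.diam (Set.range ⇑f) = 1 := by
      have := hdp f
      rw [hφsymm g] at this
      rw [← this, hdg]
    have hle : ‖f y - f z‖ ≤ 1 := by
      have := abs_sub_le_diam f y z
      rwa [hdf] at this
    rw [habs2] at hle
    norm_num at hle
  -- now the two parts
  constructor
  · intro hne
    by_cases hpqe : p = q
    · subst hpqe
      obtain ⟨a0, b0, h01, hval⟩ := (G' p).2
      intro hc
      have : a0 ∈ (G' p).val ∩ (G' p).val := by
        rw [hval]
        exact ⟨Or.inl rfl, Or.inl rfl⟩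
      rw [hc] at this
      exact this
    · have := main p q hpqe (Set.nonempty_iff_ne_empty.2 hne)
      exact Set.nonempty_iff_ne_empty.1 this
  · intro hone
    obtain ⟨z1, hz1, huniq⟩ := hone
    have hpqne : p ≠ q := by
      intro hc
      subst hc
      obtain ⟨a0, b0, h01, hval⟩ := p.2
      have ha0 : a0 ∈ p.val ∩ p.val := by rw [hval]; exact ⟨Or.inl rfl, Or.inl rfl⟩
      have hb0 : b0 ∈ p.val ∩ p.val := by rw [hval]; exact ⟨Or.inr rfl, Or.inr rfl⟩
      exact h01 ((huniq a0 ha0).trans (huniq b0 hb0).symm)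
    obtain ⟨w0, hw0⟩ := main p q hpqne ⟨z1, hz1⟩
    refine ⟨w0, hw0, ?_⟩
    intro z2 hz2
    by_contra hne2
    obtain ⟨a, b, hab, hGp⟩ := (G' p).2
    obtain ⟨c, d, hcd, hGq⟩ := (G' q).2
    have e1 : ({z2, w0} : Set X) = {a, b} :=
      pair_eq_of_two_mem hne2 (hGp ▸ hz2.1) (hGp ▸ hw0.1)
    have e2 : ({z2, w0} : Set X) = {c, d} :=
      pair_eq_of_two_mem hne2 (hGq ▸ hz2.2) (hGq ▸ hw0.2)
    have : G' p = G' q := Subtype.ext (by rw [hGp, hGq, ← e1, ← e2])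
    exact hpqne (hG'bij.1 this)
end
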